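/- arXiv:1909.05762 — 8 statements merged into one kernel-verified Lean document; each statement's English description precedes it below -/
import Mathlib

section
/- Let X₁, X₂, ... be iid 1-subgaussian random variables and Sₙ = X₁ + ... + Xₙ. Then for h(t,x) = (1-α²) ∫₀^∞ exp(ax - a²t/2) da (with any constant factor (1-α²) > 0), the process (h(t+n, x+Sₙ))ₙ is a supermartingale for every t > 0, x ∈ ℝ; in particular E[h(t+1, x+X₁)] ≤ h(t,x). -/
open MeasureTheory Real ProbabilityTheory

open Set

lemma gauss_integrable (s y : ℝ) (hs : 0 < s) :
    Integrable (fun a : ℝ => Real.exp (a * y - a ^ 2 * s / 2)) := by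
  have h1 : Integrable (fun a : ℝ => Real.exp (-(s/2) * a ^ 2)) :=
    integrable_exp_neg_mul_sq (by linarith)
  have h2 := (Integrable.comp_sub_right h1 (y / s)).const_mul (Real.exp (y ^ 2 / (2 * s)))
  refine h2.congr (Filter.Eventually.of_forall fun a => ?_)
  simp only [← Real.exp_add]
  congr 1
  field_simp
  ring

lemma integrable_of_lintegral_lt {Ω : Type*} [MeasurableSpace Ω] {μ : Measure Ω}
    {f : Ω → ℝ} (hm : Measurable f) (h0 : ∀ ω, 0 ≤ f ω)
    (hf : ∫⁻ ω, ENNReal.ofReal (f ω) ∂μ < ⊤) : Integrable f μ := by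
  refine ⟨hm.aestronglyMeasurable, ?_⟩
  rwa [hasFiniteIntegral_iff_ofReal (Filter.Eventually.of_forall h0)]

section Main
variable {Ω : Type*} [MeasurableSpace Ω] (μ : Measure Ω) [IsProbabilityMeasure μ]
  (X : ℕ → Ω → ℝ)

omit [IsProbabilityMeasure μ] in
/-- factorization of the exponential moment over the last increment -/
lemma M_rec (hmeas : ∀ i, Measurable (X i))
    (hindep : iIndepFun X μ) (n : ℕ) (a : ℝ) :
    ∫⁻ ω, ENNReal.ofReal (Real.exp (a * ∑ i ∈ Finset.range (n+1), X i ω)) ∂μ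
      = (∫⁻ ω, ENNReal.ofReal (Real.exp (a * ∑ i ∈ Finset.range n, X i ω)) ∂μ)
        * ∫⁻ ω, ENNReal.ofReal (Real.exp (a * X n ω)) ∂μ := by
  have hφ : Measurable (fun y : ℝ => ENNReal.ofReal (Real.exp (a * y))) :=
    ((measurable_id.const_mul a).exp).ennreal_ofReal
  have hsum : (∑ i ∈ Finset.range n, X i) = fun ω => ∑ i ∈ Finset.range n, X i ω := by
    funext ω; exact Finset.sum_apply ω (Finset.range n) X
  have hind : IndepFun (fun ω => ∑ i ∈ Finset.range n, X i ω) (X n) μ := by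
    rw [← hsum]; exact hindep.indepFun_sum_range_succ hmeas n
  have hSm : Measurable (fun ω => ∑ i ∈ Finset.range n, X i ω) :=
    Finset.measurable_sum _ fun i _ => hmeas i
  have hcomp : IndepFun (fun ω => ENNReal.ofReal (Real.exp (a * ∑ i ∈ Finset.range n, X i ω)))
      (fun ω => ENNReal.ofReal (Real.exp (a * X n ω))) μ := hind.comp hφ hφ
  have h1 : ∫⁻ ω, ENNReal.ofReal (Real.exp (a * ∑ i ∈ Finset.range (n+1), X i ω)) ∂μ
      = ∫⁻ ω, ENNReal.ofReal (Real.exp (a * ∑ i ∈ Finset.range n, X i ω))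
          * ENNReal.ofReal (Real.exp (a * X n ω)) ∂μ := by
    refine lintegral_congr fun ω => ?_
    rw [Finset.sum_range_succ, mul_add, Real.exp_add, ENNReal.ofReal_mul (Real.exp_pos _).le]
  rw [h1]
  exact lintegral_mul_eq_lintegral_mul_lintegral_of_indepFun''
    (hφ.comp hSm).aemeasurable (hφ.comp (hmeas n)).aemeasurable hcomp

/-- exponential moment bound for the partial sums -/
lemma M_le (hmeas : ∀ i, Measurable (X i))
    (hindep : iIndepFun X μ) (a : ℝ)
    (hb : ∀ i, ∫⁻ ω, ENNReal.ofReal (Real.exp (a * X i ω)) ∂μ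
        ≤ ENNReal.ofReal (Real.exp (a ^ 2 / 2))) (n : ℕ) :
    ∫⁻ ω, ENNReal.ofReal (Real.exp (a * ∑ i ∈ Finset.range n, X i ω)) ∂μ
      ≤ ENNReal.ofReal (Real.exp (n * (a ^ 2 / 2))) := by
  induction n with
  | zero => simp
  | succ n ih =>
    rw [M_rec μ X hmeas hindep n a]
    calc (∫⁻ ω, ENNReal.ofReal (Real.exp (a * ∑ i ∈ Finset.range n, X i ω)) ∂μ)
          * ∫⁻ ω, ENNReal.ofReal (Real.exp (a * X n ω)) ∂μ
        ≤ ENNReal.ofReal (Real.exp (n * (a ^ 2 / 2))) * ENNReal.ofReal (Real.exp (a ^ 2 / 2)) :=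
          mul_le_mul' ih (hb n)
      _ = ENNReal.ofReal (Real.exp ((n + 1 : ℕ) * (a ^ 2 / 2))) := by
          rw [← ENNReal.ofReal_mul (Real.exp_pos _).le, ← Real.exp_add]
          congr 2
          push_cast
          ring

/-- representation of the Bochner integral of the `h`-integrand as a double lintegral. -/
lemma repr_lemma (Z : Ω → ℝ) (hZ : Measurable Z) (C s x : ℝ) (hs : 0 < s) :
    ∫ ω, C * (∫ a in Ioi (0:ℝ), Real.exp (a * (x + Z ω) - a ^ 2 * s / 2)) ∂μ
      = C * (∫⁻ a in Ioi (0:ℝ), ENNReal.ofReal (Real.exp (a * x - a ^ 2 * s / 2))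
          * (∫⁻ ω, ENNReal.ofReal (Real.exp (a * Z ω)) ∂μ)).toReal := by
  have hFm : Measurable (fun p : Ω × ℝ =>
      ENNReal.ofReal (Real.exp (p.2 * (x + Z p.1) - p.2 ^ 2 * s / 2))) := by
    refine Measurable.ennreal_ofReal (Measurable.exp ?_)
    exact (measurable_snd.mul (measurable_const.add (hZ.comp measurable_fst))).sub
      (((measurable_snd.pow_const 2).mul_const s).div_const 2)
  have hmeas_a : ∀ y : ℝ, Measurable (fun a : ℝ => Real.exp (a * y - a ^ 2 * s / 2)) := by
    intro y
    exact ((measurable_id.mul_const y).sub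
      (((measurable_id.pow_const 2).mul_const s).div_const 2)).exp
  rw [integral_const_mul]
  congr 1
  have hinner : ∀ ω, ∫ a in Ioi (0:ℝ), Real.exp (a * (x + Z ω) - a ^ 2 * s / 2)
      = (∫⁻ a in Ioi (0:ℝ),
          ENNReal.ofReal (Real.exp (a * (x + Z ω) - a ^ 2 * s / 2))).toReal := fun ω =>
    integral_eq_lintegral_of_nonneg_ae (Filter.Eventually.of_forall fun a => (Real.exp_pos _).le)
      (hmeas_a (x + Z ω)).aestronglyMeasurable
  calc ∫ ω, (∫ a in Ioi (0:ℝ), Real.exp (a * (x + Z ω) - a ^ 2 * s / 2)) ∂μ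
      = ∫ ω, (∫⁻ a in Ioi (0:ℝ),
          ENNReal.ofReal (Real.exp (a * (x + Z ω) - a ^ 2 * s / 2))).toReal ∂μ :=
        integral_congr_ae (Filter.Eventually.of_forall hinner)
    _ = (∫⁻ ω, (∫⁻ a in Ioi (0:ℝ),
          ENNReal.ofReal (Real.exp (a * (x + Z ω) - a ^ 2 * s / 2))) ∂μ).toReal := by
        refine integral_toReal (Measurable.aemeasurable ?_)
          (Filter.Eventually.of_forall fun ω => ?_)
        · exact Measurable.lintegral_prod_right' hFm
        · refine lt_of_le_of_lt (lintegral_mono' Measure.restrict_le_self le_rfl) ?_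
          exact (gauss_integrable s (x + Z ω) hs).lintegral_lt_top
    _ = (∫⁻ a in Ioi (0:ℝ), (∫⁻ ω,
          ENNReal.ofReal (Real.exp (a * (x + Z ω) - a ^ 2 * s / 2)) ∂μ)).toReal := by
        rw [lintegral_lintegral_swap hFm.aemeasurable]
    _ = (∫⁻ a in Ioi (0:ℝ), ENNReal.ofReal (Real.exp (a * x - a ^ 2 * s / 2))
          * (∫⁻ ω, ENNReal.ofReal (Real.exp (a * Z ω)) ∂μ)).toReal := by
        congr 1
        refine lintegral_congr fun a => ?_
        rw [← lintegral_const_mul _ ((hZ.const_mul a).exp.ennreal_ofReal)]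
        refine lintegral_congr fun ω => ?_
        rw [← ENNReal.ofReal_mul (Real.exp_pos _).le, ← Real.exp_add]
        congr 2
        ring

/-- in the bad case, the `h`-composed process is not integrable -/
lemma bad_nonint (hmeas : ∀ i, Measurable (X i))
    (hindep : iIndepFun X μ) (a₀ : ℝ) (ha₀ : 0 < a₀)
    (hnint : ∀ i, ¬ Integrable (fun ω => Real.exp (a₀ * X i ω)) μ)
    (C s x : ℝ) (hC : 0 < C) (hs : 0 < s) (n : ℕ) :
    ¬ Integrable (fun ω => C * ∫ a in Ioi (0:ℝ),
        Real.exp (a * (x + ∑ i ∈ Finset.range (n+1), X i ω) - a ^ 2 * s / 2)) μ := by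
  intro hint
  have hZm : Measurable (fun ω => ∑ i ∈ Finset.range (n+1), X i ω) :=
    Finset.measurable_sum _ fun i _ => hmeas i
  -- lower bound on the inner integral
  have hlow : ∀ y : ℝ, 0 ≤ y → Real.exp (a₀ * y - (a₀+1) ^ 2 * s / 2)
      ≤ ∫ a in Ioi (0:ℝ), Real.exp (a * y - a ^ 2 * s / 2) := by
    intro y hy
    have hIoc : (∫ a in Ioc a₀ (a₀+1), Real.exp (a * y - a ^ 2 * s / 2))
        ≤ ∫ a in Ioi (0:ℝ), Real.exp (a * y - a ^ 2 * s / 2) := by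
      refine setIntegral_mono_set (gauss_integrable s y hs).integrableOn
        (Filter.Eventually.of_forall fun a => (Real.exp_pos _).le) ?_
      exact HasSubset.Subset.eventuallyLE fun a ha => lt_of_lt_of_le ha₀ ha.1.le
    refine le_trans ?_ hIoc
    have hconst : (∫ _ in Ioc a₀ (a₀+1), Real.exp (a₀ * y - (a₀+1) ^ 2 * s / 2))
        = Real.exp (a₀ * y - (a₀+1) ^ 2 * s / 2) := by
      rw [setIntegral_const, measureReal_def, Real.volume_Ioc]
      norm_num
    rw [← hconst]
    refine setIntegral_mono_on (integrableOn_const measure_Ioc_lt_top.ne)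
      (gauss_integrable s y hs).integrableOn measurableSet_Ioc fun a ha => ?_
    apply Real.exp_le_exp.2
    have h1 : a₀ * y ≤ a * y := mul_le_mul_of_nonneg_right ha.1.le hy
    have h3 : a ^ 2 ≤ (a₀+1) ^ 2 := by nlinarith [ha.1, ha.2, ha₀]
    have h2 : a ^ 2 * s ≤ (a₀+1) ^ 2 * s := mul_le_mul_of_nonneg_right h3 hs.le
    linarith
  have hA : MeasurableSet {ω | 0 ≤ x + ∑ i ∈ Finset.range (n+1), X i ω} :=
    measurableSet_le measurable_const (measurable_const.add hZm)
  set G : Ω → ℝ := ({ω | 0 ≤ x + ∑ i ∈ Finset.range (n+1), X i ω}).indicator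
    (fun ω => Real.exp (a₀ * (x + ∑ i ∈ Finset.range (n+1), X i ω))) with hGdef
  have hGm : Measurable G :=
    Measurable.indicator ((measurable_const.add hZm).const_mul a₀).exp hA
  have hInonneg : ∀ ω, 0 ≤ ∫ a in Ioi (0:ℝ),
      Real.exp (a * (x + ∑ i ∈ Finset.range (n+1), X i ω) - a ^ 2 * s / 2) := fun ω =>
    integral_nonneg fun a => (Real.exp_pos _).le
  have hGint : Integrable G μ := by
    refine Integrable.mono' (hint.const_mul (C⁻¹ * Real.exp ((a₀+1) ^ 2 * s / 2)))
      hGm.aestronglyMeasurable (Filter.Eventually.of_forall fun ω => ?_)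
    by_cases hω : 0 ≤ x + ∑ i ∈ Finset.range (n+1), X i ω
    · have hmem : ω ∈ {ω | 0 ≤ x + ∑ i ∈ Finset.range (n+1), X i ω} := hω
      rw [hGdef]
      rw [Real.norm_eq_abs, indicator_of_mem hmem, abs_of_pos (Real.exp_pos _)]
      have hb := hlow _ hω
      calc Real.exp (a₀ * (x + ∑ i ∈ Finset.range (n+1), X i ω))
          = Real.exp ((a₀+1) ^ 2 * s / 2)
            * Real.exp (a₀ * (x + ∑ i ∈ Finset.range (n+1), X i ω) - (a₀+1) ^ 2 * s / 2) := by
            rw [← Real.exp_add]; congr 1; ring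
        _ ≤ Real.exp ((a₀+1) ^ 2 * s / 2) * ∫ a in Ioi (0:ℝ),
              Real.exp (a * (x + ∑ i ∈ Finset.range (n+1), X i ω) - a ^ 2 * s / 2) :=
            mul_le_mul_of_nonneg_left hb (Real.exp_pos _).le
        _ = C⁻¹ * Real.exp ((a₀+1) ^ 2 * s / 2) * (C * ∫ a in Ioi (0:ℝ),
              Real.exp (a * (x + ∑ i ∈ Finset.range (n+1), X i ω) - a ^ 2 * s / 2)) := by
            field_simp
    · have hmem : ω ∉ {ω | 0 ≤ x + ∑ i ∈ Finset.range (n+1), X i ω} := hω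
      rw [hGdef, Real.norm_eq_abs, indicator_of_notMem hmem, abs_zero]
      have := hInonneg ω
      positivity
  have hEint : Integrable (fun ω =>
      Real.exp (a₀ * (x + ∑ i ∈ Finset.range (n+1), X i ω))) μ := by
    refine Integrable.mono' (hGint.add (integrable_const 1))
      (((measurable_const.add hZm).const_mul a₀).exp).aestronglyMeasurable
      (Filter.Eventually.of_forall fun ω => ?_)
    rw [Real.norm_eq_abs, abs_of_pos (Real.exp_pos _)]
    by_cases hω : 0 ≤ x + ∑ i ∈ Finset.range (n+1), X i ω
    · have hmem : ω ∈ {ω | 0 ≤ x + ∑ i ∈ Finset.range (n+1), X i ω} := hω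
      rw [hGdef]
      simp only [Pi.add_apply, indicator_of_mem hmem]
      linarith
    · have hmem : ω ∉ {ω | 0 ≤ x + ∑ i ∈ Finset.range (n+1), X i ω} := hω
      rw [hGdef]
      simp only [Pi.add_apply, indicator_of_notMem hmem]
      have : Real.exp (a₀ * (x + ∑ i ∈ Finset.range (n+1), X i ω)) ≤ 1 := by
        rw [Real.exp_le_one_iff]
        push_neg at hω
        nlinarith
      linarith
  have hZint : Integrable (fun ω => Real.exp (a₀ * ∑ i ∈ Finset.range (n+1), X i ω)) μ := by
    refine (hEint.const_mul (Real.exp (-(a₀ * x)))).congr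
      (Filter.Eventually.of_forall fun ω => ?_)
    simp only [← Real.exp_add]
    congr 1
    ring
  have hfin := hZint.lintegral_lt_top
  rw [M_rec μ X hmeas hindep n a₀] at hfin
  have hpos : 0 < ∫⁻ ω, ENNReal.ofReal (Real.exp (a₀ * ∑ i ∈ Finset.range n, X i ω)) ∂μ := by
    rw [lintegral_pos_iff_support
      (((Finset.measurable_sum _ fun i _ => hmeas i).const_mul a₀).exp.ennreal_ofReal)]
    have hsupp : (Function.support fun ω =>
        ENNReal.ofReal (Real.exp (a₀ * ∑ i ∈ Finset.range n, X i ω))) = univ := by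
      ext ω
      simp [Function.mem_support, ENNReal.ofReal_eq_zero, not_le, Real.exp_pos]
    rw [hsupp, measure_univ]
    exact zero_lt_one
  have hinf : ∫⁻ ω, ENNReal.ofReal (Real.exp (a₀ * X n ω)) ∂μ = ⊤ := by
    by_contra hne
    exact hnint n (integrable_of_lintegral_lt ((hmeas n).const_mul a₀).exp
      (fun ω => (Real.exp_pos _).le) (lt_top_iff_ne_top.2 hne))
  rw [hinf, ENNReal.mul_top hpos.ne'] at hfin
  exact lt_irrefl _ hfin

end Main

/-- For iid 1-subgaussian increments `Xᵢ`, `Sₙ = X₀ + ⋯ + X_{n-1}`, and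
`h t x = (1 - α²) ∫₀^∞ exp (a*x - a²*t/2) da` with `1 - α² > 0`,
the process `n ↦ h (t+n) (x + Sₙ)` is a supermartingale (expectations are
nonincreasing step by step); in particular `E[h (t+1) (x + X₀)] ≤ h t x`. -/
theorem h_superharmonic_for_subgaussian_walk {Ω : Type*} [MeasurableSpace Ω]
    (μ : Measure Ω) [IsProbabilityMeasure μ] (X : ℕ → Ω → ℝ)
    (hmeas : ∀ i, Measurable (X i))
    (hindep : iIndepFun X μ)
    (hident : ∀ i, μ.map (X i) = μ.map (X 0))
    (hsg : ∀ i, ∀ a : ℝ, ∫ ω, Real.exp (a * X i ω) ∂μ ≤ Real.exp (a ^ 2 / 2))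
    (α : ℝ) (hα : 0 < 1 - α ^ 2) (h : ℝ → ℝ → ℝ)
    (hh : ∀ t x, h t x = (1 - α ^ 2) * ∫ a in Set.Ioi (0 : ℝ), Real.exp (a * x - a ^ 2 * t / 2)) :
    ∀ (t x : ℝ), 0 < t →
      (∀ n : ℕ,
        ∫ ω, h (t + (n + 1 : ℕ)) (x + ∑ i ∈ Finset.range (n + 1), X i ω) ∂μ
          ≤ ∫ ω, h (t + n) (x + ∑ i ∈ Finset.range n, X i ω) ∂μ) ∧
      ∫ ω, h (t + 1) (x + X 0 ω) ∂μ ≤ h t x := by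
  intro t x ht
  have hSm : ∀ n : ℕ, Measurable (fun ω => ∑ i ∈ Finset.range n, X i ω) :=
    fun n => Finset.measurable_sum _ fun i _ => hmeas i
  have hhn : ∀ s y, 0 ≤ h s y := fun s y => by
    rw [hh]
    exact mul_nonneg hα.le (integral_nonneg fun a => (Real.exp_pos _).le)
  have hiff : ∀ (a : ℝ) (i : ℕ),
      Integrable (fun ω => Real.exp (a * X i ω)) μ ↔
      Integrable (fun ω => Real.exp (a * X 0 ω)) μ := by
    intro a i
    have key : ∀ j : ℕ, Integrable (fun ω => Real.exp (a * X j ω)) μ ↔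
        Integrable (fun y : ℝ => Real.exp (a * y)) (μ.map (X j)) := by
      intro j
      rw [integrable_map_measure
        ((show Measurable fun y : ℝ => Real.exp (a * y) by fun_prop).aestronglyMeasurable)
        (hmeas j).aemeasurable]
      exact Iff.rfl
    rw [key i, key 0, hident i]
  have main : ∀ n : ℕ,
      ∫ ω, h (t + (n + 1 : ℕ)) (x + ∑ i ∈ Finset.range (n + 1), X i ω) ∂μ
        ≤ ∫ ω, h (t + n) (x + ∑ i ∈ Finset.range n, X i ω) ∂μ := by
    intro n
    have hsn : (0:ℝ) < t + n := by positivity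
    have hsn1 : (0:ℝ) < t + (n + 1 : ℕ) := by positivity
    by_cases hgood : ∀ a : ℝ, 0 < a → Integrable (fun ω => Real.exp (a * X 0 ω)) μ
    · -- good case
      have hb : ∀ a : ℝ, 0 < a → ∀ i : ℕ, ∫⁻ ω, ENNReal.ofReal (Real.exp (a * X i ω)) ∂μ
          ≤ ENNReal.ofReal (Real.exp (a ^ 2 / 2)) := by
        intro a ha i
        have hint : Integrable (fun ω => Real.exp (a * X i ω)) μ := (hiff a i).2 (hgood a ha)
        rw [← ofReal_integral_eq_lintegral_ofReal hint
          (Filter.Eventually.of_forall fun ω => (Real.exp_pos _).le)]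
        exact ENNReal.ofReal_le_ofReal (hsg i a)
      have e1 : ∫ ω, h (t + (n + 1 : ℕ)) (x + ∑ i ∈ Finset.range (n + 1), X i ω) ∂μ
          = (1 - α ^ 2) * (∫⁻ a in Set.Ioi (0:ℝ),
              ENNReal.ofReal (Real.exp (a * x - a ^ 2 * (t + (n + 1 : ℕ)) / 2))
              * (∫⁻ ω, ENNReal.ofReal
                  (Real.exp (a * ∑ i ∈ Finset.range (n + 1), X i ω)) ∂μ)).toReal := by
        rw [← repr_lemma μ (fun ω => ∑ i ∈ Finset.range (n + 1), X i ω) (hSm (n + 1))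
          (1 - α ^ 2) (t + (n + 1 : ℕ)) x hsn1]
        exact integral_congr_ae (Filter.Eventually.of_forall fun ω => by simp only [hh])
      have e2 : ∫ ω, h (t + n) (x + ∑ i ∈ Finset.range n, X i ω) ∂μ
          = (1 - α ^ 2) * (∫⁻ a in Set.Ioi (0:ℝ),
              ENNReal.ofReal (Real.exp (a * x - a ^ 2 * (t + n) / 2))
              * (∫⁻ ω, ENNReal.ofReal
                  (Real.exp (a * ∑ i ∈ Finset.range n, X i ω)) ∂μ)).toReal := by
        rw [← repr_lemma μ (fun ω => ∑ i ∈ Finset.range n, X i ω) (hSm n)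
          (1 - α ^ 2) (t + n) x hsn]
        exact integral_congr_ae (Filter.Eventually.of_forall fun ω => by simp only [hh])
      rw [e1, e2]
      refine mul_le_mul_of_nonneg_left ?_ hα.le
      have hfin : (∫⁻ a in Set.Ioi (0:ℝ),
          ENNReal.ofReal (Real.exp (a * x - a ^ 2 * (t + n) / 2))
          * (∫⁻ ω, ENNReal.ofReal
              (Real.exp (a * ∑ i ∈ Finset.range n, X i ω)) ∂μ)) ≠ ⊤ := by
        have hle : (∫⁻ a in Set.Ioi (0:ℝ),
            ENNReal.ofReal (Real.exp (a * x - a ^ 2 * (t + n) / 2))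
            * (∫⁻ ω, ENNReal.ofReal
                (Real.exp (a * ∑ i ∈ Finset.range n, X i ω)) ∂μ))
            ≤ ∫⁻ a in Set.Ioi (0:ℝ), ENNReal.ofReal (Real.exp (a * x - a ^ 2 * t / 2)) := by
          refine lintegral_mono_ae ?_
          filter_upwards [ae_restrict_mem measurableSet_Ioi] with a ha
          calc ENNReal.ofReal (Real.exp (a * x - a ^ 2 * (t + n) / 2))
              * (∫⁻ ω, ENNReal.ofReal (Real.exp (a * ∑ i ∈ Finset.range n, X i ω)) ∂μ)
              ≤ ENNReal.ofReal (Real.exp (a * x - a ^ 2 * (t + n) / 2))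
                * ENNReal.ofReal (Real.exp (n * (a ^ 2 / 2))) :=
                mul_le_mul_right (M_le μ X hmeas hindep a (fun i => hb a ha i) n) _
            _ = ENNReal.ofReal (Real.exp (a * x - a ^ 2 * t / 2)) := by
                rw [← ENNReal.ofReal_mul (Real.exp_pos _).le, ← Real.exp_add]
                congr 2
                ring
        refine (lt_of_le_of_lt hle ?_).ne
        refine lt_of_le_of_lt (lintegral_mono' Measure.restrict_le_self le_rfl) ?_
        exact (gauss_integrable t x ht).lintegral_lt_top
      refine ENNReal.toReal_mono hfin ?_
      refine lintegral_mono_ae ?_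
      filter_upwards [ae_restrict_mem measurableSet_Ioi] with a ha
      rw [M_rec μ X hmeas hindep n a]
      calc ENNReal.ofReal (Real.exp (a * x - a ^ 2 * (t + (n + 1 : ℕ)) / 2))
          * ((∫⁻ ω, ENNReal.ofReal (Real.exp (a * ∑ i ∈ Finset.range n, X i ω)) ∂μ)
            * ∫⁻ ω, ENNReal.ofReal (Real.exp (a * X n ω)) ∂μ)
          = ENNReal.ofReal (Real.exp (a * x - a ^ 2 * (t + (n + 1 : ℕ)) / 2))
            * (∫⁻ ω, ENNReal.ofReal (Real.exp (a * X n ω)) ∂μ)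
            * (∫⁻ ω, ENNReal.ofReal (Real.exp (a * ∑ i ∈ Finset.range n, X i ω)) ∂μ) := by
            ring
        _ ≤ ENNReal.ofReal (Real.exp (a * x - a ^ 2 * (t + (n + 1 : ℕ)) / 2))
            * ENNReal.ofReal (Real.exp (a ^ 2 / 2))
            * (∫⁻ ω, ENNReal.ofReal (Real.exp (a * ∑ i ∈ Finset.range n, X i ω)) ∂μ) :=
            mul_le_mul_left (mul_le_mul_right (hb a ha n) _) _
        _ = ENNReal.ofReal (Real.exp (a * x - a ^ 2 * (t + n) / 2))
            * (∫⁻ ω, ENNReal.ofReal (Real.exp (a * ∑ i ∈ Finset.range n, X i ω)) ∂μ) := by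
            rw [← ENNReal.ofReal_mul (Real.exp_pos _).le, ← Real.exp_add]
            congr 3
            push_cast
            ring
    · -- bad case
      push_neg at hgood
      obtain ⟨a₀, ha₀, hnint0⟩ := hgood
      have hnint : ∀ i, ¬ Integrable (fun ω => Real.exp (a₀ * X i ω)) μ :=
        fun i hi => hnint0 ((hiff a₀ i).1 hi)
      have hz : ∀ m : ℕ,
          ∫ ω, h (t + (m + 1 : ℕ)) (x + ∑ i ∈ Finset.range (m + 1), X i ω) ∂μ = 0 := by
        intro m
        refine integral_undef fun hint => ?_
        refine bad_nonint μ X hmeas hindep a₀ ha₀ hnint (1 - α ^ 2) (t + (m + 1 : ℕ)) x hα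
          (by positivity) m ?_
        exact hint.congr (Filter.Eventually.of_forall fun ω => by simp only [hh])
      rcases n with _ | m
      · rw [hz 0]
        exact integral_nonneg fun ω => hhn _ _
      · rw [hz (m + 1), hz m]
  refine ⟨main, ?_⟩
  have h0 := main 0
  simp only [Nat.zero_add, Nat.cast_one, Nat.cast_zero, add_zero, zero_add, Finset.range_one,
    Finset.sum_singleton, Finset.range_zero, Finset.sum_empty] at h0
  rwa [integral_const, probReal_univ, one_smul] at h0
end

section
/- There exists a unique α ∈ (0,1) satisfying √(2π)(1-α²)exp(α²/2)(erf(α/√2)+1) = 2α; numerically α ≈ 0.8399. -/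
open Real

/-- The error function `erf z = (2/√π) ∫₀^z exp (-s²) ds`. -/
noncomputable def erf (z : ℝ) : ℝ :=
  (2 / Real.sqrt π) * ∫ s in (0 : ℝ)..z, Real.exp (-s ^ 2)

lemma exp_taylor_bound {t : ℝ} (h0 : 0 ≤ t) (h1 : t ≤ 1) :
    |Real.exp t - (1 + t + t^2/2 + t^3/6)| ≤ 5 * t^4 / 96 := by
  have h : |t| ≤ 1 := by rw [abs_of_nonneg h0]; exact h1
  have h2 := Real.exp_bound h (n := 4) (by norm_num)
  rw [abs_of_nonneg h0] at h2
  simp [Finset.sum_range_succ, Nat.factorial] at h2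
  linarith

lemma exp_neg_taylor_bound {t : ℝ} (h0 : 0 ≤ t) (h1 : t ≤ 1) :
    |Real.exp (-t) - (1 - t + t^2/2 - t^3/6)| ≤ 5 * t^4 / 96 := by
  have h : |(-t)| ≤ 1 := by rw [abs_neg, abs_of_nonneg h0]; exact h1
  have h2 := Real.exp_bound h (n := 4) (by norm_num)
  rw [abs_neg, abs_of_nonneg h0] at h2
  norm_num [Nat.factorial] at h2
  have e : (1 - t + t^2/2 - t^3/6) = ∑ m ∈ Finset.range 4, (-t) ^ m / m.factorial := by
    simp [Finset.sum_range_succ, Nat.factorial]; ring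
  rw [e]; linarith

lemma cont_gauss : Continuous (fun s : ℝ => Real.exp (-s^2)) := by continuity

lemma poly_deriv (s : ℝ) :
    HasDerivAt (fun t : ℝ => t - t^3/3 + t^5/10 - t^7/42 - 5*t^9/864)
      (1 - s^2 + s^4/2 - s^6/6 - 5*s^8/96) s := by
  have h := (((((hasDerivAt_id s).sub ((hasDerivAt_pow 3 s).div_const 3)).add
      ((hasDerivAt_pow 5 s).div_const 10)).sub ((hasDerivAt_pow 7 s).div_const 42)).sub
      (((hasDerivAt_pow 9 s).const_mul 5).div_const 864))
  refine h.congr_deriv ?_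
  push_cast; ring

lemma poly_deriv' (s : ℝ) :
    HasDerivAt (fun t : ℝ => t - t^3/3 + t^5/10 - t^7/42 + 5*t^9/864)
      (1 - s^2 + s^4/2 - s^6/6 + 5*s^8/96) s := by
  have h := (((((hasDerivAt_id s).sub ((hasDerivAt_pow 3 s).div_const 3)).add
      ((hasDerivAt_pow 5 s).div_const 10)).sub ((hasDerivAt_pow 7 s).div_const 42)).add
      (((hasDerivAt_pow 9 s).const_mul 5).div_const 864))
  refine h.congr_deriv ?_
  push_cast; ring

lemma integral_gauss_bounds {x : ℝ} (h0 : 0 ≤ x) (h1 : x ≤ 1) :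
    x - x^3/3 + x^5/10 - x^7/42 - 5*x^9/864 ≤ (∫ s in (0:ℝ)..x, Real.exp (-s^2)) ∧
    (∫ s in (0:ℝ)..x, Real.exp (-s^2)) ≤ x - x^3/3 + x^5/10 - x^7/42 + 5*x^9/864 := by
  have hint : IntervalIntegrable (fun s : ℝ => Real.exp (-s^2)) MeasureTheory.volume 0 x :=
    cont_gauss.intervalIntegrable 0 x
  have hlo : (∫ s in (0:ℝ)..x, (1 - s^2 + s^4/2 - s^6/6 - 5*s^8/96)) =
      x - x^3/3 + x^5/10 - x^7/42 - 5*x^9/864 := by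
    rw [intervalIntegral.integral_eq_sub_of_hasDerivAt (fun s _ => poly_deriv s)
      ((Continuous.intervalIntegrable (by fun_prop) 0 x))]
    ring
  have hhi : (∫ s in (0:ℝ)..x, (1 - s^2 + s^4/2 - s^6/6 + 5*s^8/96)) =
      x - x^3/3 + x^5/10 - x^7/42 + 5*x^9/864 := by
    rw [intervalIntegral.integral_eq_sub_of_hasDerivAt (fun s _ => poly_deriv' s)
      ((Continuous.intervalIntegrable (by fun_prop) 0 x))]
    ring
  constructor
  · rw [← hlo]
    apply intervalIntegral.integral_mono_on h0 (Continuous.intervalIntegrable (by fun_prop) 0 x) hint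
    intro s hs
    have hs2 : s^2 ≤ 1 := by nlinarith [hs.1, hs.2]
    have hb := abs_le.mp (exp_neg_taylor_bound (sq_nonneg s) hs2)
    nlinarith [hb.1]
  · rw [← hhi]
    apply intervalIntegral.integral_mono_on h0 hint (Continuous.intervalIntegrable (by fun_prop) 0 x)
    intro s hs
    have hs2 : s^2 ≤ 1 := by nlinarith [hs.1, hs.2]
    have hb := abs_le.mp (exp_neg_taylor_bound (sq_nonneg s) hs2)
    nlinarith [hb.2]

noncomputable def g (a : ℝ) : ℝ :=
  (1 - a^2) * Real.exp (a^2/2) *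
    (2*Real.sqrt 2*(∫ s in (0:ℝ)..(a/Real.sqrt 2), Real.exp (-s^2)) + Real.sqrt (2*π)) - 2*a

lemma key_sqrt : Real.sqrt (2*π) * (2 / Real.sqrt π) = 2 * Real.sqrt 2 := by
  have : (0:ℝ) < Real.sqrt π := Real.sqrt_pos.mpr Real.pi_pos
  rw [Real.sqrt_mul (by norm_num : (0:ℝ) ≤ 2)]
  field_simp

lemma g_eq (a : ℝ) :
    Real.sqrt (2*π) * (1 - a^2) * Real.exp (a^2/2) * (erf (a/Real.sqrt 2) + 1) - 2*a = g a := by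
  unfold g erf
  linear_combination ((1 - a^2) * Real.exp (a^2/2) *
    (∫ s in (0:ℝ)..(a/Real.sqrt 2), Real.exp (-s^2))) * key_sqrt

lemma g_deriv (x : ℝ) :
    HasDerivAt g
      (-(x*(1+x^2)) * Real.exp (x^2/2) *
        (2*Real.sqrt 2*(∫ s in (0:ℝ)..(x/Real.sqrt 2), Real.exp (-s^2)) + Real.sqrt (2*π))
        - 2*x^2) x := by
  have hs : (0:ℝ) < Real.sqrt 2 := by positivity
  have h2 : (Real.sqrt 2)^2 = 2 := Real.sq_sqrt (by norm_num)
  have hz2 : (x / Real.sqrt 2)^2 = x^2/2 := by rw [div_pow, h2]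
  have hI : HasDerivAt (fun y : ℝ => ∫ s in (0:ℝ)..y, Real.exp (-s^2))
      (Real.exp (-(x/Real.sqrt 2)^2)) (x/Real.sqrt 2) :=
    intervalIntegral.integral_hasDerivAt_right (cont_gauss.intervalIntegrable _ _)
      (cont_gauss.stronglyMeasurableAtFilter _ _) cont_gauss.continuousAt
  have hIx : HasDerivAt (fun a : ℝ => ∫ s in (0:ℝ)..(a/Real.sqrt 2), Real.exp (-s^2))
      (Real.exp (-(x/Real.sqrt 2)^2) * (1/Real.sqrt 2)) x := by
    have := HasDerivAt.comp x hI ((hasDerivAt_id x).div_const (Real.sqrt 2))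
    exact this
  have hE : HasDerivAt (fun a : ℝ => Real.exp (a^2/2)) (Real.exp (x^2/2) * (2*x^1/2)) x :=
    by have h := (Real.hasDerivAt_exp (x^2/2)).comp x ((hasDerivAt_pow 2 x).div_const 2); exact h.congr_deriv (by norm_num)
  have hA : HasDerivAt (fun a : ℝ => (1 - a^2) * Real.exp (a^2/2))
      ((0 - 2*x^1) * Real.exp (x^2/2) + (1 - x^2) * (Real.exp (x^2/2) * (2*x^1/2))) x :=
    (((hasDerivAt_const x (1:ℝ)).sub (by simpa using hasDerivAt_pow 2 x)).mul hE)
  have hB : HasDerivAt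
      (fun a : ℝ => 2*Real.sqrt 2*(∫ s in (0:ℝ)..(a/Real.sqrt 2), Real.exp (-s^2)) + Real.sqrt (2*π))
      (2*Real.sqrt 2*(Real.exp (-(x/Real.sqrt 2)^2) * (1/Real.sqrt 2))) x :=
    (hIx.const_mul _).add_const _
  have hg := (hA.mul hB).sub ((hasDerivAt_id x).const_mul 2)
  have hexp1 : Real.exp (x^2/2) * Real.exp (-(x/Real.sqrt 2)^2) = 1 := by
    rw [hz2, ← Real.exp_add]; norm_num
  refine hg.congr_deriv ?_
  symm
  have hsne : Real.sqrt 2 ≠ 0 := ne_of_gt hs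
  have hsimp : 2*Real.sqrt 2*(Real.exp (-(x/Real.sqrt 2)^2) * (1/Real.sqrt 2))
      = 2*Real.exp (-(x/Real.sqrt 2)^2) := by
    field_simp
  rw [hsimp]
  linear_combination (-2*(1-x^2))*hexp1

lemma g_anti : StrictAntiOn g (Set.Icc 0 1) := by
  apply strictAntiOn_of_deriv_neg (convex_Icc 0 1)
  · exact fun x _ => (g_deriv x).differentiableAt.continuousAt.continuousWithinAt
  · intro x hx
    rw [interior_Icc] at hx
    rw [(g_deriv x).deriv]
    have hI0 : 0 ≤ ∫ s in (0:ℝ)..(x/Real.sqrt 2), Real.exp (-s^2) :=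
      intervalIntegral.integral_nonneg (div_nonneg hx.1.le (Real.sqrt_nonneg 2))
        (fun s _ => (Real.exp_pos _).le)
    have hE := Real.exp_pos (x^2/2)
    have hsq : (0:ℝ) < Real.sqrt (2*π) := Real.sqrt_pos.mpr (by positivity)
    have h22 : (0:ℝ) ≤ 2*Real.sqrt 2*(∫ s in (0:ℝ)..(x/Real.sqrt 2), Real.exp (-s^2)) :=
      mul_nonneg (by positivity) hI0
    have hB : (0:ℝ) < 2*Real.sqrt 2*(∫ s in (0:ℝ)..(x/Real.sqrt 2), Real.exp (-s^2))
        + Real.sqrt (2*π) := by linarith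
    nlinarith [mul_pos (mul_pos (mul_pos hx.1 (by nlinarith : (0:ℝ) < 1 + x^2)) hE) hB,
      sq_nonneg x, hx.1]

lemma sqrt_two_pi_lb : (2.50662:ℝ) < Real.sqrt (2*π) := by
  rw [show (2.50662:ℝ) = Real.sqrt (2.50662^2) from (Real.sqrt_sq (by norm_num)).symm]
  apply Real.sqrt_lt_sqrt (by norm_num)
  nlinarith [Real.pi_gt_d6]

lemma sqrt_two_pi_ub : Real.sqrt (2*π) < (2.50664:ℝ) := by
  rw [show (2.50664:ℝ) = Real.sqrt (2.50664^2) from (Real.sqrt_sq (by norm_num)).symm]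
  apply Real.sqrt_lt_sqrt (by positivity)
  nlinarith [Real.pi_lt_d6]

lemma g_pos : 0 < g (0.8389:ℝ) := by
  have hs : (0:ℝ) < Real.sqrt 2 := by positivity
  have h2 : (Real.sqrt 2)^2 = 2 := Real.sq_sqrt (by norm_num)
  unfold g
  set z : ℝ := (0.8389:ℝ)/Real.sqrt 2 with hzdef
  have hsz : Real.sqrt 2 * z = 0.8389 := by rw [hzdef]; field_simp
  have hz0 : 0 ≤ z := by positivity
  have hz1 : z ≤ 1 := by
    rw [hzdef, div_le_one hs]; nlinarith
  have hz2 : z^2 = (0.8389:ℝ)^2/2 := by rw [hzdef, div_pow, h2]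
  have hIb := (integral_gauss_bounds hz0 hz1).1
  have key : 2*Real.sqrt 2*(z - z^3/3 + z^5/10 - z^7/42 - 5*z^9/864)
      = 2*0.8389*(1 - ((0.8389:ℝ)^2/2)/3 + ((0.8389:ℝ)^2/2)^2/10 - ((0.8389:ℝ)^2/2)^3/42
        - 5*((0.8389:ℝ)^2/2)^4/864) := by
    have e : 2*Real.sqrt 2*(z - z^3/3 + z^5/10 - z^7/42 - 5*z^9/864)
        = 2*(Real.sqrt 2*z)*(1 - z^2/3 + (z^2)^2/10 - (z^2)^3/42 - 5*(z^2)^4/864) := by ring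
    rw [e, hsz, hz2]
  have hJ : (1.4998:ℝ) ≤ 2*Real.sqrt 2*(∫ s in (0:ℝ)..z, Real.exp (-s^2)) := by
    have h := mul_le_mul_of_nonneg_left hIb (by positivity : (0:ℝ) ≤ 2*Real.sqrt 2)
    rw [key] at h
    nlinarith [h]
  have hE : (1.4202:ℝ) ≤ Real.exp ((0.8389:ℝ)^2/2) := by
    have hb := (abs_le.mp (exp_taylor_bound (t := (0.8389:ℝ)^2/2) (by norm_num) (by norm_num))).1
    nlinarith [hb]
  have hsq := sqrt_two_pi_lb
  have hBb : (1.4998:ℝ) + 2.50662 ≤ 2*Real.sqrt 2*(∫ s in (0:ℝ)..z, Real.exp (-s^2))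
      + Real.sqrt (2*π) := by linarith
  have h1 : (1.4202:ℝ) * (1.4998+2.50662) ≤ Real.exp ((0.8389:ℝ)^2/2) *
      (2*Real.sqrt 2*(∫ s in (0:ℝ)..z, Real.exp (-s^2)) + Real.sqrt (2*π)) :=
    mul_le_mul hE hBb (by norm_num) (le_of_lt (Real.exp_pos _))
  nlinarith [h1]

lemma g_neg : g (0.8409:ℝ) < 0 := by
  have hs : (0:ℝ) < Real.sqrt 2 := by positivity
  have h2 : (Real.sqrt 2)^2 = 2 := Real.sq_sqrt (by norm_num)
  unfold g
  set z : ℝ := (0.8409:ℝ)/Real.sqrt 2 with hzdef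
  have hsz : Real.sqrt 2 * z = 0.8409 := by rw [hzdef]; field_simp
  have hz0 : 0 ≤ z := by positivity
  have hz1 : z ≤ 1 := by
    rw [hzdef, div_le_one hs]; nlinarith
  have hz2 : z^2 = (0.8409:ℝ)^2/2 := by rw [hzdef, div_pow, h2]
  have hIb := (integral_gauss_bounds hz0 hz1).2
  have key : 2*Real.sqrt 2*(z - z^3/3 + z^5/10 - z^7/42 + 5*z^9/864)
      = 2*0.8409*(1 - ((0.8409:ℝ)^2/2)/3 + ((0.8409:ℝ)^2/2)^2/10 - ((0.8409:ℝ)^2/2)^3/42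
        + 5*((0.8409:ℝ)^2/2)^4/864) := by
    have e : 2*Real.sqrt 2*(z - z^3/3 + z^5/10 - z^7/42 + 5*z^9/864)
        = 2*(Real.sqrt 2*z)*(1 - z^2/3 + (z^2)^2/10 - (z^2)^3/42 + 5*(z^2)^4/864) := by ring
    rw [e, hsz, hz2]
  have hJ : 2*Real.sqrt 2*(∫ s in (0:ℝ)..z, Real.exp (-s^2)) ≤ (1.5031:ℝ) := by
    have h := mul_le_mul_of_nonneg_left hIb (by positivity : (0:ℝ) ≤ 2*Real.sqrt 2)
    rw [key] at h
    nlinarith [h]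
  have hE : Real.exp ((0.8409:ℝ)^2/2) ≤ (1.4243:ℝ) := by
    have hb := (abs_le.mp (exp_taylor_bound (t := (0.8409:ℝ)^2/2) (by norm_num) (by norm_num))).2
    nlinarith [hb]
  have hsq := sqrt_two_pi_ub
  have hI0 : 0 ≤ ∫ s in (0:ℝ)..z, Real.exp (-s^2) :=
    intervalIntegral.integral_nonneg hz0 (fun s _ => (Real.exp_pos _).le)
  have hB0 : (0:ℝ) ≤ 2*Real.sqrt 2*(∫ s in (0:ℝ)..z, Real.exp (-s^2)) + Real.sqrt (2*π) := by
    have := Real.sqrt_nonneg (2*π)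
    nlinarith [mul_nonneg (by positivity : (0:ℝ) ≤ 2*Real.sqrt 2) hI0]
  have hBb : 2*Real.sqrt 2*(∫ s in (0:ℝ)..z, Real.exp (-s^2)) + Real.sqrt (2*π)
      ≤ (1.5031:ℝ) + 2.50664 := by linarith
  have h1 : Real.exp ((0.8409:ℝ)^2/2) *
      (2*Real.sqrt 2*(∫ s in (0:ℝ)..z, Real.exp (-s^2)) + Real.sqrt (2*π))
      ≤ (1.4243:ℝ) * (1.5031+2.50664) :=
    mul_le_mul hE hBb hB0 (by norm_num)
  nlinarith [h1]

lemma g_cont : ContinuousOn g (Set.Icc (0.8389:ℝ) 0.8409) :=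
  fun x _ => (g_deriv x).differentiableAt.continuousAt.continuousWithinAt

/-- There is a unique `α ∈ (0,1)` with
`√(2π)(1-α²)exp(α²/2)(erf(α/√2)+1) = 2α`, and numerically `α ≈ 0.8399`. -/
theorem alpha_exists_unique :
    (∃! α : ℝ, α ∈ Set.Ioo (0 : ℝ) 1 ∧
      Real.sqrt (2 * π) * (1 - α ^ 2) * Real.exp (α ^ 2 / 2)
        * (erf (α / Real.sqrt 2) + 1) = 2 * α) ∧
    ∀ α ∈ Set.Ioo (0 : ℝ) 1,
      Real.sqrt (2 * π) * (1 - α ^ 2) * Real.exp (α ^ 2 / 2)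
          * (erf (α / Real.sqrt 2) + 1) = 2 * α →
        |α - 0.8399| < 0.001 := by
  obtain ⟨α₀, hmem, hg0⟩ : ∃ α₀ ∈ Set.Ioo (0.8389:ℝ) 0.8409, g α₀ = 0 := by
    have h := intermediate_value_Ioo' (by norm_num : (0.8389:ℝ) ≤ 0.8409) g_cont
    have h0 : (0:ℝ) ∈ Set.Ioo (g 0.8409) (g 0.8389) := ⟨g_neg, g_pos⟩
    obtain ⟨α₀, hα₀, hgα₀⟩ := h h0
    exact ⟨α₀, hα₀, hgα₀⟩
  have hmem01 : α₀ ∈ Set.Ioo (0:ℝ) 1 := ⟨by linarith [hmem.1], by linarith [hmem.2]⟩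
  have huniq : ∀ y ∈ Set.Ioo (0:ℝ) 1,
      Real.sqrt (2 * π) * (1 - y ^ 2) * Real.exp (y ^ 2 / 2)
        * (erf (y / Real.sqrt 2) + 1) = 2 * y → y = α₀ := by
    intro y hy heq
    have hgy : g y = 0 := by
      have := g_eq y
      linarith [this, heq]
    apply g_anti.injOn (Set.mem_Icc.mpr ⟨hy.1.le, hy.2.le⟩)
      (Set.mem_Icc.mpr ⟨hmem01.1.le, hmem01.2.le⟩)
    rw [hgy, hg0]
  constructor
  · refine ⟨α₀, ⟨hmem01, ?_⟩, fun y hy => huniq y hy.1 hy.2⟩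
    have := g_eq α₀
    linarith [this, hg0]
  · intro α hα heq
    have := huniq α hα heq
    subst this
    rw [abs_lt]
    constructor <;> [linarith [hmem.1]; linarith [hmem.2]]
end

section
/- Let α ∈ (0,1) be the unique solution of √(2π)(1-α²)e^{α²/2}(erf(α/√2)+1) = 2α, and let h(t,x) = (1-α²)∫₀^∞ exp(ax - a²t/2) da. Then h(t, α√t) = α/√t for all t > 0, i.e., h matches the gain function g(t,x) = x/t along the curve x = α√t. -/
set_option maxHeartbeats 1000000


open MeasureTheory Real

/-- With `α ∈ (0,1)` the root of the transcendental equation and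
`h t x = (1-α²)∫₀^∞ exp (a*x - a²*t/2) da`, we have `h (t, α√t) = α/√t` for all
`t > 0`, i.e. `h` matches the gain `g(t,x) = x/t` on the curve `x = α√t`. -/
theorem h_eq_gain_on_boundary (α : ℝ) (hα : α ∈ Set.Ioo (0 : ℝ) 1)
    (heq : Real.sqrt (2 * π) * (1 - α ^ 2) * Real.exp (α ^ 2 / 2)
      * (erf (α / Real.sqrt 2) + 1) = 2 * α)
    (h : ℝ → ℝ → ℝ)
    (hh : ∀ t x, h t x
      = (1 - α ^ 2) * ∫ a in Set.Ioi (0 : ℝ), Real.exp (a * x - a ^ 2 * t / 2)) :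
    ∀ t : ℝ, 0 < t → h t (α * Real.sqrt t) = α / Real.sqrt t := by
  intro t ht
  obtain ⟨hα0, hα1⟩ := hα
  have hs : 0 < Real.sqrt t := Real.sqrt_pos.2 ht
  set s := Real.sqrt t with hsdef
  have hs2 : s ^ 2 = t := Real.sq_sqrt ht.le
  have h2 : (0:ℝ) < Real.sqrt 2 := Real.sqrt_pos.2 (by norm_num)
  have h2sq : (Real.sqrt 2) ^ 2 = 2 := Real.sq_sqrt (by norm_num)
  set k : ℝ := s / Real.sqrt 2 with hkdef
  have hk : 0 < k := div_pos hs h2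
  set c : ℝ := α / Real.sqrt 2 with hcdef
  have hc : 0 < c := div_pos hα0 h2
  have gInt : Integrable (fun u : ℝ => Real.exp (-u ^ 2)) := by
    simpa using integrable_exp_neg_mul_sq (b := 1) one_pos
  -- change of variables
  have key : (∫ a in Set.Ioi (0:ℝ), Real.exp (-(k * a - c) ^ 2) * k)
      = ∫ u in Set.Ioi (-c : ℝ), Real.exp (-u ^ 2) := by
    have h0 : (fun a : ℝ => k * a - c) 0 = -c := by simp
    rw [← h0]
    refine integral_comp_mul_deriv_Ioi (f := fun a => k * a - c) (f' := fun _ => k)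
      (g := fun u => Real.exp (-u ^ 2)) ?_ ?_ ?_ ?_ ?_ ?_
    · exact (Continuous.continuousOn (by continuity))
    · exact Filter.tendsto_atTop_add_const_right _ (-c)
        (Filter.Tendsto.const_mul_atTop hk Filter.tendsto_id)
    · intro x _
      simpa using (((hasDerivAt_id x).const_mul k).sub_const c).hasDerivWithinAt (s := Set.Ioi x)
    · exact (Continuous.continuousOn (by continuity))
    · exact gInt.integrableOn
    · have : Integrable (fun a : ℝ => Real.exp (-(k * a - c) ^ 2)) := by
        have h1 : Integrable (fun u : ℝ => Real.exp (-(u - c) ^ 2)) :=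
          gInt.comp_sub_right c
        exact (integrable_comp_mul_left_iff
          (fun u : ℝ => Real.exp (-(u - c) ^ 2)) hk.ne').2 h1
      exact (this.mul_const k).integrableOn
  -- rewrite the integrand
  have hpoint : ∀ a : ℝ, Real.exp (a * (α * s) - a ^ 2 * t / 2)
      = Real.exp (α ^ 2 / 2) * Real.exp (-(k * a - c) ^ 2) := by
    intro a
    rw [← Real.exp_add]
    congr 1
    have : k ^ 2 = t / 2 := by
      rw [hkdef, div_pow, hs2, h2sq]
    have hkc : k * c = s * α / 2 := by
      rw [hkdef, hcdef, div_mul_div_comm, Real.mul_self_sqrt (by norm_num : (0:ℝ) ≤ 2)]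
    have hc2 : c ^ 2 = α ^ 2 / 2 := by
      rw [hcdef, div_pow, h2sq]
    field_simp [hkdef, hcdef]
    linear_combination (2 * a ^ 2) * this - 4 * a * hkc + 2 * hc2
  -- compute the shifted Gaussian integral
  have hIoi : (∫ u in Set.Ioi (0:ℝ), Real.exp (-u ^ 2)) = Real.sqrt π / 2 := by
    simpa using integral_gaussian_Ioi 1
  have hsplit : (∫ u in Set.Ioi (-c : ℝ), Real.exp (-u ^ 2))
      = (∫ u in Set.Ioc (-c : ℝ) 0, Real.exp (-u ^ 2))
        + ∫ u in Set.Ioi (0:ℝ), Real.exp (-u ^ 2) := by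
    rw [← setIntegral_union (Set.Ioc_disjoint_Ioi le_rfl) measurableSet_Ioi
      gInt.integrableOn gInt.integrableOn,
      Set.Ioc_union_Ioi_eq_Ioi (by linarith : -c ≤ (0:ℝ))]
  have hIoc : (∫ u in Set.Ioc (-c : ℝ) 0, Real.exp (-u ^ 2))
      = ∫ u in (0:ℝ)..c, Real.exp (-u ^ 2) := by
    rw [← intervalIntegral.integral_of_le (by linarith : -c ≤ (0:ℝ))]
    have := intervalIntegral.integral_comp_neg (a := (0:ℝ)) (b := c)
      (fun u : ℝ => Real.exp (-u ^ 2))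
    simpa using this.symm
  have herf : (∫ u in (0:ℝ)..c, Real.exp (-u ^ 2))
      = Real.sqrt π / 2 * erf c := by
    have hπ : 0 < Real.sqrt π := Real.sqrt_pos.2 pi_pos
    rw [erf]
    field_simp
  have hJ : (∫ u in Set.Ioi (-c : ℝ), Real.exp (-u ^ 2))
      = Real.sqrt π / 2 * (erf c + 1) := by
    rw [hsplit, hIoc, herf, hIoi]; ring
  -- put everything together
  rw [hh]
  have hint : (∫ a in Set.Ioi (0:ℝ), Real.exp (a * (α * s) - a ^ 2 * t / 2))
      = Real.exp (α ^ 2 / 2) * ((Real.sqrt π / 2 * (erf c + 1)) / k) := by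
    calc (∫ a in Set.Ioi (0:ℝ), Real.exp (a * (α * s) - a ^ 2 * t / 2))
        = ∫ a in Set.Ioi (0:ℝ), Real.exp (α ^ 2 / 2) * Real.exp (-(k * a - c) ^ 2) := by
          exact setIntegral_congr_fun measurableSet_Ioi (fun a _ => hpoint a)
      _ = Real.exp (α ^ 2 / 2) * ∫ a in Set.Ioi (0:ℝ), Real.exp (-(k * a - c) ^ 2) :=
          integral_const_mul _ _
      _ = Real.exp (α ^ 2 / 2) * ((∫ a in Set.Ioi (0:ℝ),
            Real.exp (-(k * a - c) ^ 2) * k) / k) := by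
          rw [integral_mul_const]
          field_simp
      _ = Real.exp (α ^ 2 / 2) * ((Real.sqrt π / 2 * (erf c + 1)) / k) := by
          rw [key, hJ]
  rw [hint]
  have h2pi : Real.sqrt (2 * π) = Real.sqrt 2 * Real.sqrt π :=
    Real.sqrt_mul (by norm_num) π
  have hπ : 0 < Real.sqrt π := Real.sqrt_pos.2 pi_pos
  rw [h2pi] at heq
  rw [hkdef]
  field_simp
  nlinarith [heq, hs, hπ, h2, Real.exp_pos (α ^ 2 / 2)]
end

section
/- Let α ∈ (0,1) be the unique solution of √(2π)(1-α²)e^{α²/2}(erf(α/√2)+1) = 2α, and h(t,x) = (1-α²)∫₀^∞ exp(ax - a²t/2) da. Then h(t,x) ≥ x/t for all t > 0 and x ∈ ℝ. -/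
open MeasureTheory Real

namespace HDomAux

open Set Filter

noncomputable def F (u : ℝ) : ℝ := ∫ b in Set.Ioi (0 : ℝ), Real.exp (b * u - b ^ 2 / 2)

lemma key_rewrite (u b : ℝ) :
    Real.exp (b * u - b ^ 2 / 2) = Real.exp (u ^ 2 / 2) * Real.exp (-(1/2) * (b - u) ^ 2) := by
  rw [← Real.exp_add]; ring_nf

lemma integrableF (u : ℝ) :
    IntegrableOn (fun b => Real.exp (b * u - b ^ 2 / 2)) (Set.Ioi 0) := by
  have h1 : Integrable (fun b : ℝ => Real.exp (-(1/2) * b ^ 2)) :=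
    integrable_exp_neg_mul_sq (by norm_num)
  have h2 := (h1.comp_sub_right u).const_mul (Real.exp (u ^ 2 / 2))
  have h3 : (fun b : ℝ => Real.exp (u ^ 2 / 2) * Real.exp (-(1/2) * (b - u) ^ 2))
      = fun b => Real.exp (b * u - b ^ 2 / 2) := by
    funext b; rw [key_rewrite]
  rw [← h3]
  exact h2.integrableOn

lemma integrableD (u : ℝ) :
    IntegrableOn (fun b => (b - u) * Real.exp (b * u - b ^ 2 / 2)) (Set.Ioi 0) := by
  have h1 : Integrable (fun b : ℝ => b * Real.exp (-(1/2) * b ^ 2)) :=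
    integrable_mul_exp_neg_mul_sq (by norm_num)
  have h2 := (h1.comp_sub_right u).const_mul (Real.exp (u ^ 2 / 2))
  have h3 : (fun b : ℝ => Real.exp (u ^ 2 / 2) * ((b - u) * Real.exp (-(1/2) * (b - u) ^ 2)))
      = fun b => (b - u) * Real.exp (b * u - b ^ 2 / 2) := by
    funext b; rw [key_rewrite]; ring
  rw [← h3]
  exact h2.integrableOn

lemma ftc (u : ℝ) :
    ∫ b in Set.Ioi (0 : ℝ), (b - u) * Real.exp (b * u - b ^ 2 / 2) = 1 := by
  have hderiv : ∀ b ∈ Set.Ici (0 : ℝ),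
      HasDerivAt (fun b => -Real.exp (b * u - b ^ 2 / 2))
        ((b - u) * Real.exp (b * u - b ^ 2 / 2)) b := by
    intro b _
    have h1 : HasDerivAt (fun b : ℝ => b * u - b ^ 2 / 2) (u - b) b := by
      have := ((hasDerivAt_id b).mul_const u).sub ((hasDerivAt_pow 2 b).div_const 2)
      refine this.congr_deriv ?_
      norm_num
    have h2 := (h1.exp).neg
    exact h2.congr_deriv (by ring)
  have htend : Tendsto (fun b => -Real.exp (b * u - b ^ 2 / 2)) atTop (nhds 0) := by
    have h1 : Tendsto (fun b : ℝ => b * u - b ^ 2 / 2) atTop atBot := by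
      have hb : Tendsto (fun b : ℝ => u - b / 2) atTop atBot := by
        have hd : Tendsto (fun b : ℝ => b / 2) atTop atTop :=
          tendsto_id.atTop_div_const (by norm_num)
        have := tendsto_atBot_add_const_left atTop u (tendsto_neg_atTop_atBot.comp hd)
        simpa [sub_eq_add_neg, Function.comp] using this
      have h2 : Tendsto (fun b : ℝ => b * (u - b / 2)) atTop atBot :=
        Filter.Tendsto.atTop_mul_atBot₀ tendsto_id hb
      refine h2.congr (fun b => by ring)
    have := (Real.tendsto_exp_atBot.comp h1).neg
    simpa using this
  have := integral_Ioi_of_hasDerivAt_of_tendsto' hderiv (integrableD u) htend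
  simpa using this

lemma integral_comp_sub_Ioi (f : ℝ → ℝ) (c d : ℝ) :
    ∫ x in Set.Ioi c, f (x - d) = ∫ x in Set.Ioi (c - d), f x := by
  have A : MeasurableEmbedding fun x : ℝ => x - d :=
    (Homeomorph.subRight d).isClosedEmbedding.measurableEmbedding
  have hm : Measure.map (fun x : ℝ => x - d) volume = volume := by
    simpa [sub_eq_add_neg] using map_add_right_eq_self (volume : Measure ℝ) (-d)
  have := MeasurableEmbedding.setIntegral_map (μ := volume) A f (Set.Ioi (c - d))
  rw [hm] at this
  rw [this]
  congr 1
  ext x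
  simp [sub_lt_sub_iff_right]

lemma gauss_Ioi : ∫ s in Set.Ioi (0:ℝ), Real.exp (-(1/2) * s ^ 2) = Real.sqrt (2 * π) / 2 := by
  have := integral_gaussian_Ioi (1/2)
  rw [this]
  norm_num [mul_comm]

lemma Fval {c : ℝ} (hc : 0 < c) :
    F c = Real.exp (c ^ 2 / 2) *
      (Real.sqrt 2 * (∫ s in (0:ℝ)..(c / Real.sqrt 2), Real.exp (-s ^ 2))
        + Real.sqrt (2 * π) / 2) := by
  have hg : Integrable (fun s : ℝ => Real.exp (-(1/2) * s ^ 2)) :=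
    integrable_exp_neg_mul_sq (by norm_num)
  have h1 : F c = Real.exp (c ^ 2 / 2) *
      ∫ b in Set.Ioi (0:ℝ), Real.exp (-(1/2) * (b - c) ^ 2) := by
    rw [← integral_const_mul]
    exact setIntegral_congr_fun measurableSet_Ioi (fun b _ => key_rewrite c b)
  have h2 : ∫ b in Set.Ioi (0:ℝ), Real.exp (-(1/2) * (b - c) ^ 2)
      = ∫ s in Set.Ioi (-c), Real.exp (-(1/2) * s ^ 2) := by
    have := integral_comp_sub_Ioi (fun s => Real.exp (-(1/2) * s ^ 2)) 0 c
    simpa using this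
  have h3 : ∫ s in Set.Ioi (-c), Real.exp (-(1/2) * s ^ 2)
      = (∫ s in Set.Ioc (-c) 0, Real.exp (-(1/2) * s ^ 2))
        + ∫ s in Set.Ioi (0:ℝ), Real.exp (-(1/2) * s ^ 2) := by
    rw [← setIntegral_union (Set.Ioc_disjoint_Ioi le_rfl) measurableSet_Ioi
      hg.integrableOn hg.integrableOn, Set.Ioc_union_Ioi_eq_Ioi (by linarith)]
  have h4 : ∫ s in Set.Ioc (-c) 0, Real.exp (-(1/2) * s ^ 2)
      = ∫ s in (0:ℝ)..c, Real.exp (-(1/2) * s ^ 2) := by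
    rw [← intervalIntegral.integral_of_le (by linarith : -c ≤ (0:ℝ))]
    have := intervalIntegral.integral_comp_neg (a := 0) (b := c)
      (fun s => Real.exp (-(1/2) * s ^ 2))
    simp only [neg_zero] at this
    rw [← this]
    refine intervalIntegral.integral_congr (fun s _ => ?_)
    ring_nf
  have h5 : ∫ s in (0:ℝ)..c, Real.exp (-(1/2) * s ^ 2)
      = Real.sqrt 2 * ∫ s in (0:ℝ)..(c / Real.sqrt 2), Real.exp (-s ^ 2) := by
    have hs2 : Real.sqrt 2 ≠ 0 := by positivity
    have := intervalIntegral.integral_comp_div (a := 0) (b := c)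
      (fun u => Real.exp (-u ^ 2)) hs2
    simp only [zero_div, smul_eq_mul] at this
    rw [← this]
    refine intervalIntegral.integral_congr (fun s _ => ?_)
    show Real.exp (-(1/2) * s ^ 2) = Real.exp (-(s / Real.sqrt 2) ^ 2)
    rw [div_pow, Real.sq_sqrt (by norm_num : (0:ℝ) ≤ 2)]
    congr 1
    ring
  rw [h1, h2, h3, h4, h5, gauss_Ioi]

lemma Falpha {α : ℝ} (hα : α ∈ Set.Ioo (0:ℝ) 1)
    (heq : Real.sqrt (2 * π) * (1 - α ^ 2) * Real.exp (α ^ 2 / 2)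
      * (erf (α / Real.sqrt 2) + 1) = 2 * α) :
    (1 - α ^ 2) * F α = α := by
  rw [Fval hα.1]
  unfold erf at heq
  set I := ∫ s in (0:ℝ)..(α / Real.sqrt 2), Real.exp (-s ^ 2) with hI
  set E := Real.exp (α ^ 2 / 2) with hE
  have hpi : Real.sqrt (2 * π) = Real.sqrt 2 * Real.sqrt π :=
    Real.sqrt_mul (by norm_num) π
  have hππ : (0:ℝ) < Real.sqrt π := Real.sqrt_pos.mpr pi_pos
  rw [hpi] at heq ⊢
  field_simp at heq
  nlinarith [heq, hππ, Real.exp_pos (α ^ 2 / 2)]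

lemma main_ineq {α : ℝ} (hα : α ∈ Set.Ioo (0:ℝ) 1) (hFα : (1 - α ^ 2) * F α = α) (u : ℝ) :
    u ≤ (1 - α ^ 2) * F u := by
  have hbint : IntegrableOn (fun b => b * Real.exp (b * α - b ^ 2 / 2)) (Set.Ioi 0) := by
    have h := (integrableD α).add ((integrableF α).const_mul α)
    exact h.congr (Filter.Eventually.of_forall fun b => by simp [Pi.add_apply]; ring)
  have hbval : ∫ b in Set.Ioi (0:ℝ), b * Real.exp (b * α - b ^ 2 / 2) = 1 + α * F α := by
    have he : (fun b => b * Real.exp (b * α - b ^ 2 / 2))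
        = (fun b => (b - α) * Real.exp (b * α - b ^ 2 / 2)
            + α * Real.exp (b * α - b ^ 2 / 2)) := by
      funext b; ring
    rw [he, integral_add (integrableD α) ((integrableF α).const_mul α), ftc α,
      integral_const_mul]
    rfl
  have hmono : F α + (u - α) * (1 + α * F α) ≤ F u := by
    have hpt : ∀ b ∈ Set.Ioi (0:ℝ),
        Real.exp (b * α - b ^ 2 / 2) + (u - α) * (b * Real.exp (b * α - b ^ 2 / 2))
          ≤ Real.exp (b * u - b ^ 2 / 2) := by
      intro b _
      have h1 : b * (u - α) + 1 ≤ Real.exp (b * (u - α)) := Real.add_one_le_exp _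
      have h2 : Real.exp (b * u - b ^ 2 / 2)
          = Real.exp (b * α - b ^ 2 / 2) * Real.exp (b * (u - α)) := by
        rw [← Real.exp_add]; ring_nf
      have h3 : (0:ℝ) < Real.exp (b * α - b ^ 2 / 2) := Real.exp_pos _
      rw [h2]
      nlinarith [h1, h3]
    have hint1 : IntegrableOn (fun b => Real.exp (b * α - b ^ 2 / 2)
        + (u - α) * (b * Real.exp (b * α - b ^ 2 / 2))) (Set.Ioi 0) :=
      (integrableF α).add (hbint.const_mul _)
    have h := setIntegral_mono_on hint1 (integrableF u) measurableSet_Ioi hpt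
    rw [integral_add (integrableF α) (hbint.const_mul _), integral_const_mul, hbval] at h
    exact h
  have hA : (0:ℝ) ≤ 1 - α ^ 2 := by nlinarith [hα.1, hα.2]
  have h2 := mul_le_mul_of_nonneg_left hmono hA
  have e1 : (1 - α ^ 2) * (F α + (u - α) * (1 + α * F α)) = u := by
    linear_combination (1 + (u - α) * α) * hFα
  linarith [h2, e1.ge, e1.le]

end HDomAux

/-- With `α ∈ (0,1)` the root of the transcendental equation and
`h t x = (1-α²)∫₀^∞ exp (a*x - a²*t/2) da`, `h` dominates the gain function:
`h t x ≥ x / t` for all `t > 0` and `x ∈ ℝ`. -/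
theorem h_dominates_gain (α : ℝ) (hα : α ∈ Set.Ioo (0 : ℝ) 1)
    (heq : Real.sqrt (2 * π) * (1 - α ^ 2) * Real.exp (α ^ 2 / 2)
      * (erf (α / Real.sqrt 2) + 1) = 2 * α)
    (h : ℝ → ℝ → ℝ)
    (hh : ∀ t x, h t x
      = (1 - α ^ 2) * ∫ a in Set.Ioi (0 : ℝ), Real.exp (a * x - a ^ 2 * t / 2)) :
    ∀ (t x : ℝ), 0 < t → x / t ≤ h t x := by
  intro t x ht
  rw [hh]
  have hFα := HDomAux.Falpha hα heq
  set s := Real.sqrt t with hs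
  have hs0 : 0 < s := Real.sqrt_pos.mpr ht
  have hst : s * s = t := Real.mul_self_sqrt ht.le
  have hsub : ∫ a in Set.Ioi (0:ℝ), Real.exp (a * x - a ^ 2 * t / 2)
      = s⁻¹ * HDomAux.F (x / s) := by
    have h := integral_comp_mul_left_Ioi
      (fun b => Real.exp (b * (x / s) - b ^ 2 / 2)) 0 hs0
    simp only [mul_zero, smul_eq_mul] at h
    rw [HDomAux.F, ← h]
    refine setIntegral_congr_fun measurableSet_Ioi (fun a _ => ?_)
    congr 1
    rw [← hst]
    field_simp
  rw [hsub]
  have hkey := HDomAux.main_ineq hα hFα (x / s)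
  have hxt : x / t = (x / s) / s := by rw [div_div, hst]
  have hrw : (1 - α ^ 2) * (s⁻¹ * HDomAux.F (x / s))
      = ((1 - α ^ 2) * HDomAux.F (x / s)) / s := by
    field_simp
  rw [hxt, hrw]
  gcongr
end

section
/- Let α ∈ (0,1) be the unique solution of √(2π)(1-α²)e^{α²/2}(erf(α/√2)+1) = 2α, and h(t,x) = (1-α²)∫₀^∞ exp(ax - a²t/2) da. Then ∂h/∂x (t, α√t) = 1/t, i.e., h satisfies the smooth fit condition with the gain function g(t,x) = x/t at the boundary x = α√t. -/
open MeasureTheory Real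

namespace SmoothFitAux
open Set Filter

-- completed square
lemma sq_complete (t x a : ℝ) (ht : 0 < t) :
    a * x - a ^ 2 * t / 2 = x ^ 2 / (2 * t) - t / 2 * (a - x / t) ^ 2 := by
  field_simp
  ring

lemma intA (t x : ℝ) (ht : 0 < t) :
    IntegrableOn (fun a => Real.exp (a * x - a ^ 2 * t / 2)) (Ioi 0) := by
  have h : (fun a => Real.exp (a * x - a ^ 2 * t / 2))
      = fun a => Real.exp (x ^ 2 / (2 * t)) * Real.exp (-(t / 2) * (a - x / t) ^ 2) := by
    funext a
    rw [← Real.exp_add]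
    congr 1
    rw [sq_complete t x a ht]; ring
  rw [h]
  exact (((integrable_exp_neg_mul_sq (half_pos ht)).comp_sub_right (x / t)).const_mul
    _).integrableOn

lemma intB (t x : ℝ) (ht : 0 < t) :
    IntegrableOn (fun a => a * Real.exp (a * x - a ^ 2 * t / 2)) (Ioi 0) := by
  have h : (fun a => a * Real.exp (a * x - a ^ 2 * t / 2))
      = fun a => Real.exp (x ^ 2 / (2 * t)) *
          (((a - x / t) * Real.exp (-(t / 2) * (a - x / t) ^ 2))
            + x / t * Real.exp (-(t / 2) * (a - x / t) ^ 2)) := by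
    funext a
    have := sq_complete t x a ht
    rw [show a * x - a ^2 * t / 2 = x ^ 2 / (2*t) + (-(t/2) * (a - x/t)^2) by rw [this]; ring,
      Real.exp_add]
    ring
  rw [h]
  exact ((((integrable_mul_exp_neg_mul_sq (half_pos ht)).comp_sub_right (x / t)).add
    (((integrable_exp_neg_mul_sq (half_pos ht)).comp_sub_right (x / t)).const_mul
      (x / t))).const_mul _).integrableOn

lemma tend0 (t x : ℝ) (ht : 0 < t) :
    Tendsto (fun a => Real.exp (a * x - a ^ 2 * t / 2)) atTop (nhds 0) := by
  have h : (fun a => Real.exp (a * x - a ^ 2 * t / 2))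
      = fun a => Real.exp (x ^ 2 / (2 * t)) * Real.exp (-(t / 2 * (a - x / t) ^ 2)) := by
    funext a
    rw [← Real.exp_add]
    congr 1
    rw [sq_complete t x a ht]; ring
  rw [h]
  rw [show (0:ℝ) = Real.exp (x ^ 2 / (2*t)) * 0 by ring]
  apply Tendsto.const_mul
  apply Real.tendsto_exp_atBot.comp
  apply Filter.tendsto_neg_atBot_iff.mpr
  have h2 : Tendsto (fun a : ℝ => a - x / t) atTop atTop := by
    simpa [sub_eq_add_neg] using tendsto_atTop_add_const_right atTop (-(x / t)) tendsto_id
  exact ((tendsto_pow_atTop two_ne_zero).comp h2).const_mul_atTop (half_pos ht)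

lemma ftc_piece (t x : ℝ) (ht : 0 < t) :
    ∫ a in Ioi (0:ℝ), (a - x / t) * Real.exp (a * x - a ^ 2 * t / 2) = 1 / t := by
  have hint : IntegrableOn (fun a => (a - x / t) * Real.exp (a * x - a ^ 2 * t / 2)) (Ioi 0) := by
    have heq : (fun a => (a - x / t) * Real.exp (a * x - a ^ 2 * t / 2))
        = fun a => a * Real.exp (a * x - a ^ 2 * t / 2)
          - x / t * Real.exp (a * x - a ^ 2 * t / 2) := by funext a; ring
    rw [heq]
    exact (intB t x ht).sub ((intA t x ht).const_mul (x / t))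
  have hderiv : ∀ a ∈ Ici (0:ℝ),
      HasDerivAt (fun a => -(1 / t) * Real.exp (a * x - a ^ 2 * t / 2))
        ((a - x / t) * Real.exp (a * x - a ^ 2 * t / 2)) a := by
    intro a _
    have h1 : HasDerivAt (fun a : ℝ => a * x - a ^ 2 * t / 2) (x - a * t) a := by
      have := ((hasDerivAt_id a).mul_const x).sub
        ((((hasDerivAt_id a).pow 2).mul_const t).div_const 2)
      refine this.congr_deriv ?_
      simp; ring
    have := (h1.exp).const_mul (-(1 / t))
    refine this.congr_deriv ?_
    field_simp
    ring
  have htend : Tendsto (fun a => -(1 / t) * Real.exp (a * x - a ^ 2 * t / 2)) atTop (nhds 0) := by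
    rw [show (0:ℝ) = -(1/t) * 0 by ring]
    exact (tend0 t x ht).const_mul _
  rw [integral_Ioi_of_hasDerivAt_of_tendsto' hderiv hint htend]
  norm_num


lemma shift_Ioi (g : ℝ → ℝ) (m : ℝ) :
    ∫ a in Ioi (0:ℝ), g (a - m) = ∫ u in Ioi (-m), g u := by
  rw [← integral_indicator measurableSet_Ioi, ← integral_indicator measurableSet_Ioi]
  have : (Ioi (0:ℝ)).indicator (fun a => g (a - m)) =
      fun a => (Ioi (-m)).indicator g (a - m) := by
    funext a
    by_cases ha : a ∈ Ioi (0:ℝ)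
    · rw [indicator_of_mem ha, indicator_of_mem (by simpa using ha.out)]
    · rw [indicator_of_notMem ha, indicator_of_notMem]
      simp only [mem_Ioi, not_lt] at ha ⊢
      linarith
  rw [this, integral_sub_right_eq_self (fun a => (Ioi (-m)).indicator g a) m]

lemma gauss_split (t m : ℝ) (ht : 0 < t) (hm : 0 < m) :
    ∫ u in Ioi (-m), Real.exp (-(t/2) * u ^ 2)
      = (∫ u in (0:ℝ)..m, Real.exp (-(t/2) * u ^ 2)) + Real.sqrt (π / (t/2)) / 2 := by
  have hdisj : Disjoint (Ioc (-m) (0:ℝ)) (Ioi (0:ℝ)) := Ioc_disjoint_Ioi le_rfl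
  have hun : Ioc (-m) (0:ℝ) ∪ Ioi 0 = Ioi (-m) := Ioc_union_Ioi_eq_Ioi (by linarith)
  have hint : IntegrableOn (fun u => Real.exp (-(t/2) * u ^ 2)) (Ioi (-m)) :=
    (integrable_exp_neg_mul_sq (half_pos ht)).integrableOn
  rw [← hun, setIntegral_union hdisj measurableSet_Ioi
    ((integrable_exp_neg_mul_sq (half_pos ht)).integrableOn)
    ((integrable_exp_neg_mul_sq (half_pos ht)).integrableOn)]
  congr 1
  · rw [← intervalIntegral.integral_of_le (by linarith : -m ≤ 0)]
    have : ∫ u in (-m)..(0:ℝ), Real.exp (-(t/2) * u ^ 2)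
        = ∫ u in (0:ℝ)..m, Real.exp (-(t/2) * (-u) ^ 2) := by
      rw [intervalIntegral.integral_comp_neg (fun u => Real.exp (-(t/2) * u ^ 2))]
      norm_num
    rw [this]
    congr 1
    funext u
    ring_nf
  · exact integral_gaussian_Ioi (t/2)

lemma gauss_scale (t m : ℝ) (ht : 0 < t) :
    ∫ u in (0:ℝ)..m, Real.exp (-(t/2) * u ^ 2)
      = (Real.sqrt (t/2))⁻¹ * ∫ s in (0:ℝ)..(Real.sqrt (t/2) * m), Real.exp (-s ^ 2) := by
  have hc : Real.sqrt (t/2) ≠ 0 := by positivity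
  have : (fun u => Real.exp (-(t/2) * u ^ 2))
      = fun u => Real.exp (-(Real.sqrt (t/2) * u) ^ 2) := by
    funext u
    rw [mul_pow, Real.sq_sqrt (by positivity : (0:ℝ) ≤ t/2)]
    ring_nf
  rw [this, intervalIntegral.integral_comp_mul_left (fun s => Real.exp (-s ^ 2)) hc]
  simp [smul_eq_mul]

lemma sq_complete' (t x a : ℝ) (ht : 0 < t) :
    a * x - a ^ 2 * t / 2 = x ^ 2 / (2 * t) - t / 2 * (a - x / t) ^ 2 := by
  field_simp; ring

lemma I_val (α t : ℝ) (ht : 0 < t) (hα : 0 < α) :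
    ∫ a in Ioi (0:ℝ), Real.exp (a * (α * Real.sqrt t) - a ^ 2 * t / 2)
      = Real.exp (α ^ 2 / 2) *
        ((Real.sqrt (t/2))⁻¹ * (∫ s in (0:ℝ)..(α / Real.sqrt 2), Real.exp (-s ^ 2))
          + Real.sqrt (π / (t/2)) / 2) := by
  have hst : (0:ℝ) < Real.sqrt t := Real.sqrt_pos.mpr ht
  have hm : α * Real.sqrt t / t = α / Real.sqrt t := by
    rw [← Real.sqrt_mul_self ht.le]
    field_simp
    rw [Real.sq_sqrt (Real.sqrt_nonneg _)]
  have hx2 : (α * Real.sqrt t) ^ 2 / (2 * t) = α ^ 2 / 2 := by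
    rw [mul_pow, Real.sq_sqrt ht.le]
    field_simp
  have step1 : ∫ a in Ioi (0:ℝ), Real.exp (a * (α * Real.sqrt t) - a ^ 2 * t / 2)
      = ∫ a in Ioi (0:ℝ), Real.exp (α ^ 2 / 2)
          * Real.exp (-(t/2) * (a - α / Real.sqrt t) ^ 2) := by
    apply integral_congr_ae
    filter_upwards with a
    rw [← Real.exp_add, sq_complete' t (α * Real.sqrt t) a ht, hx2, hm]
    ring_nf
  rw [step1, MeasureTheory.integral_const_mul]
  congr 1
  have := shift_Ioi (fun u => Real.exp (-(t/2) * u ^ 2)) (α / Real.sqrt t)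
  rw [this, gauss_split t (α / Real.sqrt t) ht (by positivity),
    gauss_scale t (α / Real.sqrt t) ht]
  have h2 : Real.sqrt (t/2) * (α / Real.sqrt t) = α / Real.sqrt 2 := by
    rw [Real.sqrt_div ht.le 2]
    have h2' : (0:ℝ) < Real.sqrt 2 := by positivity
    field_simp
  rw [h2]


lemma final_alg (α t E : ℝ) (ht : 0 < t) (hα : α ∈ Ioo (0:ℝ) 1)
    (heq' : Real.sqrt (2*π) * (1-α^2) * Real.exp (α^2/2) * ((2/Real.sqrt π) * E + 1) = 2*α) :
    (1 - α^2) * (1/t + (α * Real.sqrt t / t) *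
      (Real.exp (α^2/2) * ((Real.sqrt (t/2))⁻¹ * E + Real.sqrt (π/(t/2))/2))) = 1/t := by
  have hst : Real.sqrt t ^ 2 = t := Real.sq_sqrt ht.le
  have hs2 : Real.sqrt 2 ^ 2 = 2 := Real.sq_sqrt (by norm_num)
  have hspi : Real.sqrt π ^ 2 = π := Real.sq_sqrt pi_pos.le
  have hstp : (0:ℝ) < Real.sqrt t := Real.sqrt_pos.mpr ht
  have hs2p : (0:ℝ) < Real.sqrt 2 := Real.sqrt_pos.mpr (by norm_num)
  have hspip : (0:ℝ) < Real.sqrt π := Real.sqrt_pos.mpr pi_pos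
  have h1 : Real.sqrt (2*π) = Real.sqrt 2 * Real.sqrt π := Real.sqrt_mul (by norm_num) π
  have h2 : Real.sqrt (t/2) = Real.sqrt t / Real.sqrt 2 := Real.sqrt_div ht.le 2
  have h3 : Real.sqrt (π/(t/2)) = Real.sqrt 2 * Real.sqrt π / Real.sqrt t := by
    rw [show π/(t/2) = 2*π/t by field_simp, Real.sqrt_div (by positivity) t, h1]
  rw [h1] at heq'
  rw [h2, h3]
  set st := Real.sqrt t
  set s2 := Real.sqrt 2
  set spi := Real.sqrt π
  set B := Real.exp (α^2/2)
  have hBp : 0 < B := Real.exp_pos _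
  rw [show t = st ^ 2 from hst.symm]
  field_simp at heq' ⊢
  have heq2 : s2 * (1-α^2) * B * (2*E + spi) = 2 * α := by
    linear_combination heq'
  linear_combination α * heq2


lemma D_val (t x : ℝ) (ht : 0 < t) :
    ∫ a in Ioi (0:ℝ), a * Real.exp (a * x - a ^ 2 * t / 2)
      = 1/t + (x/t) * ∫ a in Ioi (0:ℝ), Real.exp (a * x - a ^ 2 * t / 2) := by
  have key : ∫ a in Ioi (0:ℝ), a * Real.exp (a * x - a ^ 2 * t / 2)
      = ∫ a in Ioi (0:ℝ), ((a - x/t) * Real.exp (a * x - a ^ 2 * t / 2)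
          + (x/t) * Real.exp (a * x - a ^ 2 * t / 2)) := by
    apply integral_congr_ae
    filter_upwards with a
    ring
  have i1 : IntegrableOn (fun a => (a - x / t) * Real.exp (a * x - a ^ 2 * t / 2)) (Ioi 0) := by
    have heqf : (fun a => (a - x / t) * Real.exp (a * x - a ^ 2 * t / 2))
        = fun a => a * Real.exp (a * x - a ^ 2 * t / 2)
          - x / t * Real.exp (a * x - a ^ 2 * t / 2) := by funext a; ring
    rw [heqf]
    exact (intB t x ht).sub ((intA t x ht).const_mul (x / t))
  rw [key, integral_add i1 ((intA t x ht).const_mul (x/t)), ftc_piece t x ht,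
    MeasureTheory.integral_const_mul]

lemma deriv_under (t c : ℝ) (ht : 0 < t) :
    HasDerivAt (fun x => ∫ a in Ioi (0:ℝ), Real.exp (a * x - a ^ 2 * t / 2))
      (∫ a in Ioi (0:ℝ), a * Real.exp (a * c - a ^ 2 * t / 2)) c := by
  have key := hasDerivAt_integral_of_dominated_loc_of_deriv_le (μ := volume.restrict (Ioi 0))
    (F := fun x a => Real.exp (a * x - a ^ 2 * t / 2))
    (F' := fun x a => a * Real.exp (a * x - a ^ 2 * t / 2))
    (x₀ := c) (bound := fun a => |a| * Real.exp (a * (c + 1) - a ^ 2 * t / 2))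
    (Metric.ball_mem_nhds c one_pos)
    (Eventually.of_forall fun x => (Continuous.aestronglyMeasurable (by continuity)))
    (intA t c ht)
    (Continuous.aestronglyMeasurable (by continuity))
    ?_ ?_ ?_
  · exact key.2
  · filter_upwards [ae_restrict_mem measurableSet_Ioi] with a ha x hx
    have ha' : 0 < a := ha
    rw [Real.norm_eq_abs, abs_mul, abs_of_pos (Real.exp_pos _), abs_of_pos ha']
    have hx1 : x ≤ c + 1 := by
      have := abs_lt.mp (mem_ball_iff_norm.mp hx)
      linarith [this.2]
    gcongr
  · exact (intB t (c+1) ht).congr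
      (by filter_upwards [ae_restrict_mem measurableSet_Ioi] with a ha
          rw [abs_of_pos ha])
  · filter_upwards with a x _
    have h1 : HasDerivAt (fun x : ℝ => a * x - a ^ 2 * t / 2) a x := by
      simpa using ((hasDerivAt_id x).const_mul a).sub_const (a ^ 2 * t / 2)
    simpa [mul_comm] using h1.exp

end SmoothFitAux

open SmoothFitAux in
/-- Smooth fit: with `α ∈ (0,1)` the root of the transcendental equation and
`h t x = (1-α²)∫₀^∞ exp (a*x - a²*t/2) da`, the spatial derivative of `h` at the
boundary point `x = α√t` equals `1/t`, the derivative of the gain `g(t,x) = x/t`. -/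
theorem smooth_fit (α : ℝ) (hα : α ∈ Set.Ioo (0 : ℝ) 1)
    (heq : Real.sqrt (2 * π) * (1 - α ^ 2) * Real.exp (α ^ 2 / 2)
      * (erf (α / Real.sqrt 2) + 1) = 2 * α)
    (h : ℝ → ℝ → ℝ)
    (hh : ∀ t x, h t x
      = (1 - α ^ 2) * ∫ a in Set.Ioi (0 : ℝ), Real.exp (a * x - a ^ 2 * t / 2)) :
    ∀ t : ℝ, 0 < t → HasDerivAt (fun x => h t x) (1 / t) (α * Real.sqrt t) := by
  intro t ht
  have hfun : (fun x => h t x)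
      = fun x => (1 - α ^ 2) * ∫ a in Set.Ioi (0:ℝ), Real.exp (a * x - a ^ 2 * t / 2) :=
    funext fun x => hh t x
  rw [hfun]
  have HD := (deriv_under t (α * Real.sqrt t) ht).const_mul (1 - α ^ 2)
  have hval : (1 - α ^ 2) * ∫ a in Set.Ioi (0:ℝ),
      a * Real.exp (a * (α * Real.sqrt t) - a ^ 2 * t / 2) = 1 / t := by
    rw [D_val t (α * Real.sqrt t) ht, I_val α t ht hα.1]
    have heq' : Real.sqrt (2*π) * (1-α^2) * Real.exp (α^2/2)
        * ((2/Real.sqrt π) * (∫ s in (0:ℝ)..(α / Real.sqrt 2), Real.exp (-s ^ 2)) + 1)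
          = 2*α := by
      simpa only [erf] using heq
    exact final_alg α t _ ht hα heq'
  rw [← hval]
  exact HD
end

section
/- For 0 < c < 1/2, the function λ(a) = (1/2)(e^a + e^{-a})e^{-ca²} - 1 has a unique positive root a₀; moreover λ(a) ≥ 0 for a ∈ [0, a₀] and λ(a) ≤ 0 for a ≥ a₀. -/
open Real Set

noncomputable def Gfun (a : ℝ) : ℝ := 2 * Real.log (Real.cosh a) - a * (Real.sinh a / Real.cosh a)

lemma hasDerivAt_Gfun (a : ℝ) :
    HasDerivAt Gfun ((Real.sinh a * Real.cosh a - a) / Real.cosh a ^ 2) a := by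
  have hc : Real.cosh a ≠ 0 := (Real.cosh_pos a).ne'
  have h1 : HasDerivAt (fun a => Real.log (Real.cosh a)) (Real.sinh a / Real.cosh a) a := by
    simpa using (Real.hasDerivAt_cosh a).log hc
  have h2 : HasDerivAt (fun a : ℝ => Real.sinh a / Real.cosh a)
      ((Real.cosh a * Real.cosh a - Real.sinh a * Real.sinh a) / Real.cosh a ^ 2) a :=
    (Real.hasDerivAt_sinh a).div (Real.hasDerivAt_cosh a) hc
  have h3 : HasDerivAt (fun a : ℝ => a * (Real.sinh a / Real.cosh a))
      (1 * (Real.sinh a / Real.cosh a) +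
        a * ((Real.cosh a * Real.cosh a - Real.sinh a * Real.sinh a) / Real.cosh a ^ 2)) a :=
    (hasDerivAt_id a).mul h2
  have := (h1.const_mul 2).sub h3
  refine this.congr_deriv ?_
  have hsq : Real.cosh a * Real.cosh a - Real.sinh a * Real.sinh a = 1 := by
    have := Real.cosh_sq_sub_sinh_sq a; nlinarith [this]
  rw [hsq]
  field_simp
  ring

lemma Gfun_pos {a : ℝ} (ha : 0 < a) : 0 < Gfun a := by
  have hmono : StrictMonoOn Gfun (Ici (0:ℝ)) := by
    apply strictMonoOn_of_deriv_pos (convex_Ici 0)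
    · exact fun x _ => (hasDerivAt_Gfun x).continuousAt.continuousWithinAt
    · intro x hx
      rw [interior_Ici] at hx
      rw [(hasDerivAt_Gfun x).deriv]
      apply div_pos _ (by positivity)
      have h2x : x < Real.sinh x * Real.cosh x := by
        have h1 : 2 * x < Real.sinh (2 * x) := Real.self_lt_sinh_iff.mpr (by linarith [hx.out])
        have h2 : Real.sinh (2 * x) = 2 * Real.sinh x * Real.cosh x := Real.sinh_two_mul x
        linarith
      linarith
  have h0 : Gfun 0 = 0 := by simp [Gfun]
  have := hmono self_mem_Ici (mem_Ici.mpr ha.le) ha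
  rwa [h0] at this

noncomputable def hfun (a : ℝ) : ℝ := Real.log (Real.cosh a) / a ^ 2

lemma hasDerivAt_hfun {a : ℝ} (ha : a ≠ 0) :
    HasDerivAt hfun
      ((Real.sinh a / Real.cosh a * a ^ 2 - Real.log (Real.cosh a) * (2 * a)) / (a ^ 2) ^ 2) a := by
  have hc : Real.cosh a ≠ 0 := (Real.cosh_pos a).ne'
  have h1 : HasDerivAt (fun a => Real.log (Real.cosh a)) (Real.sinh a / Real.cosh a) a := by
    simpa using (Real.hasDerivAt_cosh a).log hc
  have h2 : HasDerivAt (fun a : ℝ => a ^ 2) (2 * a) a := by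
    simpa using hasDerivAt_pow 2 a
  exact h1.div h2 (pow_ne_zero 2 ha)

lemma hfun_strictAnti : StrictAntiOn hfun (Ioi (0:ℝ)) := by
  apply strictAntiOn_of_deriv_neg (convex_Ioi 0)
  · exact fun x hx => (hasDerivAt_hfun (ne_of_gt hx)).continuousAt.continuousWithinAt
  · intro x hx
    rw [interior_Ioi] at hx
    have hx0 : (0:ℝ) < x := hx
    rw [(hasDerivAt_hfun hx0.ne').deriv]
    apply div_neg_of_neg_of_pos _ (by positivity)
    have hG := Gfun_pos hx0
    unfold Gfun at hG
    nlinarith [hG, hx0]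

lemma cosh_ge_one_add_sq_half (a : ℝ) : 1 + a ^ 2 / 2 ≤ Real.cosh a := by
  have h1 : Real.cosh a = 2 * Real.sinh (a / 2) ^ 2 + 1 := by
    have := Real.cosh_two_mul (a / 2)
    have h2 : Real.cosh (a / 2) ^ 2 = Real.sinh (a / 2) ^ 2 + 1 := Real.cosh_sq (a / 2)
    have h3 : 2 * (a / 2) = a := by ring
    rw [h3] at this
    linarith
  have h4 : (a / 2) ^ 2 ≤ Real.sinh (a / 2) ^ 2 := by
    rcases le_or_gt 0 a with h | h
    · have := Real.self_le_sinh_iff.mpr (by linarith : (0:ℝ) ≤ a / 2)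
      nlinarith [this, (by linarith : (0:ℝ) ≤ a / 2)]
    · have h5 : Real.sinh (a / 2) ≤ a / 2 := Real.sinh_le_self_iff.mpr (by linarith)
      have h6 : Real.sinh (a / 2) < 0 := by
        rw [Real.sinh_neg_iff]; linarith
      nlinarith
  nlinarith

lemma log_one_add_ge {x : ℝ} (hx : 0 ≤ x) : x - x ^ 2 ≤ Real.log (1 + x) := by
  have h1 : (0:ℝ) < 1 + x := by linarith
  have h2 : Real.log (1 + x)⁻¹ ≤ (1 + x)⁻¹ - 1 := Real.log_le_sub_one_of_pos (by positivity)
  rw [Real.log_inv] at h2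
  have h3 : 1 - (1 + x)⁻¹ ≤ Real.log (1 + x) := by linarith
  have h5 : (1 + x)⁻¹ * (1 + x) = 1 := inv_mul_cancel₀ h1.ne'
  have h4 : x - x ^ 2 ≤ 1 - (1 + x)⁻¹ := by
    nlinarith [h5, h1, pow_nonneg hx 3]
  linarith

/-- For `0 < c < 1/2`, the function `λ a = (1/2)(e^a + e^{-a})e^{-c a²} - 1 = cosh a · e^{-c a²} - 1`
has a unique positive root `a₀`; moreover `λ ≥ 0` on `[0, a₀]` and `λ ≤ 0` on `[a₀, ∞)`. -/
theorem lambda_unique_positive_root (c : ℝ) (hc : c ∈ Set.Ioo (0 : ℝ) (1 / 2)) :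
    ∃ a₀ : ℝ, 0 < a₀ ∧ Real.cosh a₀ * Real.exp (-c * a₀ ^ 2) - 1 = 0 ∧
      (∀ a : ℝ, 0 < a → Real.cosh a * Real.exp (-c * a ^ 2) - 1 = 0 → a = a₀) ∧
      (∀ a ∈ Set.Icc (0 : ℝ) a₀, 0 ≤ Real.cosh a * Real.exp (-c * a ^ 2) - 1) ∧
      (∀ a : ℝ, a₀ ≤ a → Real.cosh a * Real.exp (-c * a ^ 2) - 1 ≤ 0) := by
  obtain ⟨hc0, hc2⟩ := hc
  set f : ℝ → ℝ := fun a => Real.log (Real.cosh a) - c * a ^ 2 with hf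
  have hbridge : ∀ a : ℝ, Real.cosh a * Real.exp (-c * a ^ 2) = Real.exp (f a) := by
    intro a
    rw [hf]
    simp only
    rw [Real.exp_sub, Real.exp_log (Real.cosh_pos a), neg_mul, Real.exp_neg, div_eq_mul_inv]
  have hfcont : Continuous f := by
    apply Continuous.sub
    · exact Real.continuous_cosh.log (fun x => (Real.cosh_pos x).ne')
    · continuity
  -- endpoints
  set aL : ℝ := Real.sqrt (1 - 2 * c) with haL
  set aH : ℝ := 1 / c + 1 with haH
  have h12c : (0:ℝ) < 1 - 2 * c := by linarith
  have haL0 : 0 < aL := Real.sqrt_pos.mpr h12c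
  have haLsq : aL ^ 2 = 1 - 2 * c := Real.sq_sqrt h12c.le
  have haL1 : aL ≤ 1 := by
    rw [haL]
    calc Real.sqrt (1 - 2 * c) ≤ Real.sqrt 1 := Real.sqrt_le_sqrt (by linarith)
      _ = 1 := Real.sqrt_one
  have haH1 : 1 ≤ aH := by
    rw [haH]
    have : 0 < 1 / c := by positivity
    linarith
  have haLH : aL ≤ aH := haL1.trans haH1
  have hfL : 0 < f aL := by
    have h1 : 1 + aL ^ 2 / 2 ≤ Real.cosh aL := cosh_ge_one_add_sq_half aL
    have h2 : aL ^ 2 / 2 - (aL ^ 2 / 2) ^ 2 ≤ Real.log (1 + aL ^ 2 / 2) :=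
      log_one_add_ge (by positivity)
    have h3 : Real.log (1 + aL ^ 2 / 2) ≤ Real.log (Real.cosh aL) :=
      Real.log_le_log (by positivity) h1
    rw [hf]; simp only
    rw [haLsq] at *
    nlinarith
  have hfH : f aH < 0 := by
    have haH0 : 0 < aH := by linarith
    have h1 : Real.cosh aH ≤ Real.exp aH := by
      rw [Real.cosh_eq]
      have : Real.exp (-aH) ≤ Real.exp aH := Real.exp_le_exp.mpr (by linarith)
      linarith
    have h2 : Real.log (Real.cosh aH) ≤ aH := by
      calc Real.log (Real.cosh aH) ≤ Real.log (Real.exp aH) :=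
            Real.log_le_log (Real.cosh_pos aH) h1
        _ = aH := Real.log_exp aH
    have h3 : aH < c * aH ^ 2 := by
      have hca : c * aH = 1 + c := by rw [haH]; field_simp
      nlinarith
    rw [hf]; simp only
    linarith
  -- IVT
  have h0mem : (0:ℝ) ∈ Icc (f aH) (f aL) := ⟨hfH.le, hfL.le⟩
  obtain ⟨a₀, ha₀mem, ha₀⟩ := intermediate_value_Icc' haLH hfcont.continuousOn h0mem
  have ha₀pos : 0 < a₀ := lt_of_lt_of_le haL0 ha₀mem.1
  -- f a₀ = 0, so hfun a₀ = c
  have hhc : hfun a₀ = c := by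
    have : Real.log (Real.cosh a₀) = c * a₀ ^ 2 := by
      have := ha₀; rw [hf] at this; simp only at this; linarith
    rw [hfun, this]
    field_simp
  have hsign : ∀ a : ℝ, 0 < a → (f a = (hfun a - c) * a ^ 2) := by
    intro a ha
    rw [hf, hfun]; simp only
    field_simp
  refine ⟨a₀, ha₀pos, ?_, ?_, ?_, ?_⟩
  · rw [hbridge a₀, ha₀, Real.exp_zero]; ring
  · intro a ha hroot
    rw [hbridge a, sub_eq_zero] at hroot
    have hfa : f a = 0 := by
      rwa [← Real.exp_zero, Real.exp_eq_exp] at hroot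
    have : hfun a = c := by
      have h := hsign a ha
      rw [hfa] at h
      have ha2 : a ^ 2 ≠ 0 := by positivity
      rcases mul_eq_zero.mp h.symm with h' | h'
      · linarith [sub_eq_zero.mp h']
      · exact absurd h' ha2
    exact hfun_strictAnti.injOn (mem_Ioi.mpr ha) (mem_Ioi.mpr ha₀pos) (this.trans hhc.symm)
  · rintro a ⟨ha0, ha1⟩
    rcases eq_or_lt_of_le ha0 with rfl | hapos
    · simp
    · have hge : c ≤ hfun a := by
        rcases eq_or_lt_of_le ha1 with rfl | hlt
        · exact hhc.ge
        · rw [← hhc]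
          exact (hfun_strictAnti (mem_Ioi.mpr hapos) (mem_Ioi.mpr ha₀pos) hlt).le
      have : 0 ≤ f a := by
        rw [hsign a hapos]
        have : 0 ≤ hfun a - c := by linarith
        positivity
      rw [hbridge a]
      have := Real.one_le_exp this
      linarith
  · intro a ha
    have hapos : 0 < a := lt_of_lt_of_le ha₀pos ha
    have hle : hfun a ≤ c := by
      rcases eq_or_lt_of_le ha with rfl | hlt
      · exact hhc.le
      · rw [← hhc]
        exact (hfun_strictAnti (mem_Ioi.mpr ha₀pos) (mem_Ioi.mpr hapos) hlt).le
    have hfa : f a ≤ 0 := by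
      rw [hsign a hapos]
      have h1 : hfun a - c ≤ 0 := by linarith
      have h2 : (0:ℝ) < a ^ 2 := by positivity
      nlinarith
    rw [hbridge a]
    have := Real.exp_le_one_iff.mpr hfa
    linarith
end

section
/- Let c ∈ (0,1/2), a₀ > 0 the unique positive root of cosh(a)e^{-ca²} = 1, and f_c(t,x) = ∫₀^∞ e^{ax-ca²t}[cosh(a)e^{-ca²} - 1] da. If f_c(t,x) ≥ 0 and δ ≥ 0, ε ∈ ℝ satisfy ε ≤ a₀δc, then f_c(t+δ, x+ε) ≥ e^{εa₀ - δca₀²} f_c(t,x) ≥ 0. -/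
open MeasureTheory Real Set


/-- Gaussian-type integrability. -/
lemma gauss_integrableOn (y b : ℝ) (hb : 0 < b) :
    IntegrableOn (fun a : ℝ => Real.exp (y * a - b * a ^ 2)) (Set.Ioi 0) := by
  have hInt : Integrable (fun a : ℝ => Real.exp (y * a - b * a ^ 2)) := by
    have hg : Integrable (fun a : ℝ => Real.exp (y ^ 2 / (2 * b)) * Real.exp (-(b / 2) * a ^ 2)) :=
      (integrable_exp_neg_mul_sq (by linarith)).const_mul _
    refine hg.mono' ?_ ?_
    · exact (Continuous.rexp (by continuity)).aestronglyMeasurable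
    · filter_upwards with a
      rw [Real.norm_eq_abs, abs_of_pos (Real.exp_pos _), ← Real.exp_add]
      apply Real.exp_le_exp.2
      have h : 0 ≤ (y - b * a) ^ 2 / (2 * b) := by positivity
      have hexp : (y - b * a) ^ 2 / (2 * b) = y ^ 2 / (2 * b) + -(b / 2) * a ^ 2 - (y * a - b * a ^ 2) := by
        field_simp
        ring
      linarith [hexp ▸ h]
  exact hInt.integrableOn
lemma integrand_integrableOn (c y s : ℝ) (hc : 0 < c) (hs : 0 < s) :
    IntegrableOn (fun a : ℝ =>
      Real.exp (a * y - c * a ^ 2 * s) * (Real.cosh a * Real.exp (-c * a ^ 2) - 1))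
      (Set.Ioi 0) := by
  have hfun : ∀ a : ℝ,
      Real.exp (a * y - c * a ^ 2 * s) * (Real.cosh a * Real.exp (-c * a ^ 2) - 1) =
        Real.exp ((y + 1) * a - (c * (s + 1)) * a ^ 2) / 2 +
          Real.exp ((y - 1) * a - (c * (s + 1)) * a ^ 2) / 2 -
          Real.exp (y * a - (c * s) * a ^ 2) := by
    intro a
    rw [Real.cosh_eq]
    rw [show (y + 1) * a - c * (s + 1) * a ^ 2 = (a * y - c * a ^ 2 * s) + a + -c * a ^ 2 by ring,
      show (y - 1) * a - c * (s + 1) * a ^ 2 = (a * y - c * a ^ 2 * s) + -a + -c * a ^ 2 by ring,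
      show y * a - c * s * a ^ 2 = a * y - c * a ^ 2 * s by ring,
      Real.exp_add, Real.exp_add, Real.exp_add, Real.exp_add]
    ring
  have h1 := (gauss_integrableOn (y + 1) (c * (s + 1)) (by nlinarith)).div_const 2
  have h2 := (gauss_integrableOn (y - 1) (c * (s + 1)) (by nlinarith)).div_const 2
  have h3 := gauss_integrableOn y (c * s) (by positivity)
  have := (h1.add h2).sub h3
  have heq : (fun a : ℝ => Real.exp (a * y - c * a ^ 2 * s) * (Real.cosh a * Real.exp (-c * a ^ 2) - 1)) = (((fun a : ℝ => Real.exp ((y + 1) * a - (c * (s + 1)) * a ^ 2) / 2) + fun a : ℝ => Real.exp ((y - 1) * a - (c * (s + 1)) * a ^ 2) / 2) - fun a : ℝ => Real.exp (y * a - (c * s) * a ^ 2)) := by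
    funext a
    simpa using hfun a
  rw [IntegrableOn, heq]
  exact this


lemma hasDerivAt_tanh' (w : ℝ) : HasDerivAt Real.tanh (1 / Real.cosh w ^ 2) w := by
  have h := (Real.hasDerivAt_sinh w).div (Real.hasDerivAt_cosh w) (Real.cosh_pos w).ne'
  have hfun : (Real.sinh / Real.cosh) = Real.tanh :=
    funext fun x => (Real.tanh_eq_sinh_div_cosh x).symm
  rw [hfun] at h
  refine h.congr_deriv ?_
  have := Real.cosh_sq_sub_sinh_sq w
  field_simp
  linarith
lemma continuous_tanh' : Continuous Real.tanh := by
  have h : Real.tanh = fun x => Real.sinh x / Real.cosh x := funext Real.tanh_eq_sinh_div_cosh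
  rw [h]
  exact Real.continuous_sinh.div Real.continuous_cosh fun x => (Real.cosh_pos x).ne'

lemma tanh_concave_aux {u v : ℝ} (hu : 0 < u) (huv : u ≤ v) :
    u * Real.tanh v ≤ v * Real.tanh u := by
  rcases eq_or_lt_of_le huv with rfl | hlt
  · ring_nf; exact le_refl _
  · set G : ℝ → ℝ := fun w => Real.tanh u * w - u * Real.tanh w with hG
    have hG' : ∀ w : ℝ, HasDerivAt G (Real.tanh u - u * (1 / Real.cosh w ^ 2)) w := by
      intro w
      have h := ((hasDerivAt_id w).const_mul (Real.tanh u)).sub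
        ((hasDerivAt_tanh' w).const_mul u)
      rw [mul_one] at h
      exact h
    obtain ⟨m, hm, hms⟩ := exists_hasDerivAt_eq_slope G _ hlt
      (Continuous.continuousOn ((continuous_const.mul continuous_id).sub (continuous_const.mul continuous_tanh')) : ContinuousOn G _) (fun w _ => hG' w)
    have hGu : G u = 0 := by simp [hG]; ring
    have hkey : 0 ≤ Real.tanh u - u * (1 / Real.cosh m ^ 2) := by
      have hcm : Real.cosh u ≤ Real.cosh m := by
        rw [Real.cosh_le_cosh]
        rw [abs_of_pos hu, abs_of_pos (lt_trans hu hm.1)]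
        exact hm.1.le
      have h1 : u * (1 / Real.cosh m ^ 2) ≤ u * (1 / Real.cosh u ^ 2) := by
        apply mul_le_mul_of_nonneg_left _ hu.le
        apply one_div_le_one_div_of_le (by positivity)
        exact pow_le_pow_left₀ (Real.cosh_pos u).le hcm 2
      have h2 : u * (1 / Real.cosh u ^ 2) ≤ Real.tanh u := by
        rw [Real.tanh_eq_sinh_div_cosh]
        have hs := (Real.self_lt_sinh_iff.2 hu).le
        have hc := Real.one_le_cosh u
        have hcp := Real.cosh_pos u
        rw [← sub_nonneg]
        have : sinh u / cosh u - u * (1 / cosh u ^ 2) = (sinh u * cosh u - u) / cosh u ^ 2 := by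
          field_simp
        rw [this]
        apply div_nonneg _ (by positivity)
        nlinarith
      linarith
    have : 0 ≤ (G v - G u) / (v - u) := hms ▸ hkey
    have hGv : 0 ≤ G v := by
      have := (div_nonneg_iff.1 this)
      rcases this with ⟨h1, _⟩ | ⟨_, h2⟩
      · linarith [hGu ▸ h1]
      · linarith
    simpa [hG, hGu, sub_nonneg, mul_comm] using hGv
lemma mu_sign (c a₀ : ℝ) (hc : 0 < c) (ha₀ : 0 < a₀)
    (hroot : Real.log (Real.cosh a₀) - c * a₀ ^ 2 = 0) :
    (∀ a, 0 < a → a ≤ a₀ → 0 ≤ Real.log (Real.cosh a) - c * a ^ 2) ∧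
      (∀ a, a₀ ≤ a → Real.log (Real.cosh a) - c * a ^ 2 ≤ 0) := by
  set μ : ℝ → ℝ := fun a => Real.log (Real.cosh a) - c * a ^ 2 with hμdef
  set φ : ℝ → ℝ := fun a => Real.tanh a - 2 * c * a with hφdef
  have hμ' : ∀ w : ℝ, HasDerivAt μ (φ w) w := by
    intro w
    have h1 : HasDerivAt (fun a => Real.log (Real.cosh a)) (Real.sinh w / Real.cosh w) w :=
      (Real.hasDerivAt_cosh w).log (Real.cosh_pos w).ne'
    have h2 : HasDerivAt (fun a : ℝ => c * a ^ 2) (2 * c * w) w := by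
      have := (hasDerivAt_pow 2 w).const_mul c
      refine this.congr_deriv ?_
      norm_num
      ring
    have h3 := h1.sub h2
    rw [← Real.tanh_eq_sinh_div_cosh] at h3
    exact h3
  have hμcont : Continuous μ := by
    apply Continuous.sub
    · exact Real.continuous_cosh.log fun x => (Real.cosh_pos x).ne'
    · continuity
  have hμ0 : μ 0 = 0 := by simp [hμdef]
  have hμa₀ : μ a₀ = 0 := hroot
  -- sign propagation from concavity of tanh
  have key : ∀ u v : ℝ, 0 < u → u ≤ v → 0 < φ v → 0 < φ u := by
    intro u v hu huv hv
    have h := tanh_concave_aux hu huv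
    have hvpos : 0 < v := lt_of_lt_of_le hu huv
    have : u * φ v ≤ v * φ u := by
      simp only [hφdef]
      nlinarith
    nlinarith
  -- strict monotonicity of μ on [0, m] whenever φ m > 0
  have mono : ∀ m : ℝ, 0 < m → 0 < φ m → StrictMonoOn μ (Icc 0 m) := by
    intro m hm hφm
    apply strictMonoOn_of_deriv_pos (convex_Icc 0 m) hμcont.continuousOn
    intro w hw
    rw [interior_Icc] at hw
    rw [(hμ' w).deriv]
    exact key w m hw.1 hw.2.le hφm
  have hφa₀ : φ a₀ ≤ 0 := by
    by_contra h
    push_neg at h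
    have := mono a₀ ha₀ h (Set.left_mem_Icc.2 ha₀.le) (Set.right_mem_Icc.2 ha₀.le) ha₀
    rw [hμ0, hμa₀] at this
    exact lt_irrefl 0 this
  constructor
  · intro a ha haa₀
    rcases eq_or_lt_of_le haa₀ with rfl | hlt
    · exact hμa₀.ge
    · by_contra h
      push_neg at h
      obtain ⟨m, hm, hms⟩ := exists_hasDerivAt_eq_slope μ φ hlt
        hμcont.continuousOn (fun w _ => hμ' w)
      have hφm : 0 < φ m := by
        rw [hms, hμa₀]
        apply div_pos _ (by linarith)
        simp only [hμdef]
        linarith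
      have := mono m (lt_trans ha hm.1) hφm
        (Set.left_mem_Icc.2 (lt_trans ha hm.1).le)
        ⟨ha.le, hm.1.le⟩ ha
      rw [hμ0] at this
      simp only [hμdef] at this
      linarith
  · intro a haa₀
    have hanti : AntitoneOn μ (Icc a₀ a) := by
      apply antitoneOn_of_deriv_nonpos (convex_Icc a₀ a) hμcont.continuousOn
      · intro w _
        exact (hμ' w).differentiableAt.differentiableWithinAt
      · intro w hw
        rw [interior_Icc] at hw
        rw [(hμ' w).deriv]
        by_contra hpos
        push_neg at hpos
        exact absurd (key a₀ w ha₀ hw.1.le hpos) (not_lt.2 hφa₀)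
    have := hanti (Set.left_mem_Icc.2 haa₀) (Set.right_mem_Icc.2 haa₀) haa₀
    rw [hμa₀] at this
    exact this
/-- Propagation of the submartingale inequality: with `a₀` the unique positive root of
`cosh a · e^{-c a²} = 1` and `f_c t x = ∫₀^∞ e^{a x - c a² t}(cosh a · e^{-c a²} - 1) da`,
if `f_c t x ≥ 0`, `δ ≥ 0` and `ε ≤ a₀ δ c`, then
`f_c (t+δ) (x+ε) ≥ e^{ε a₀ - δ c a₀²} f_c t x ≥ 0`. -/
theorem fc_propagation (c a₀ t x δ ε : ℝ) (hc : c ∈ Set.Ioo (0 : ℝ) (1 / 2))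
    (ha₀ : 0 < a₀) (hroot : Real.cosh a₀ * Real.exp (-c * a₀ ^ 2) = 1)
    (f : ℝ → ℝ → ℝ)
    (hf : ∀ t x, f t x = ∫ a in Set.Ioi (0 : ℝ),
      Real.exp (a * x - c * a ^ 2 * t) * (Real.cosh a * Real.exp (-c * a ^ 2) - 1))
    (ht : 0 < t) (hfpos : 0 ≤ f t x) (hδ : 0 ≤ δ) (hε : ε ≤ a₀ * δ * c) :
    Real.exp (ε * a₀ - δ * c * a₀ ^ 2) * f t x ≤ f (t + δ) (x + ε) ∧
      0 ≤ f (t + δ) (x + ε) := by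
  obtain ⟨hc0, -⟩ := hc
  set K := Real.exp (ε * a₀ - δ * c * a₀ ^ 2) with hK
  have hroot' : Real.log (Real.cosh a₀) - c * a₀ ^ 2 = 0 := by
    have h := congrArg Real.log hroot
    rw [Real.log_mul (Real.cosh_pos a₀).ne' (Real.exp_pos _).ne', Real.log_exp,
      Real.log_one] at h
    linarith
  obtain ⟨hA, hB⟩ := mu_sign c a₀ hc0 ha₀ hroot'
  have hrw : ∀ a : ℝ, Real.cosh a * Real.exp (-c * a ^ 2) =
      Real.exp (Real.log (Real.cosh a) - c * a ^ 2) := by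
    intro a
    rw [Real.exp_sub, Real.exp_log (Real.cosh_pos a), div_eq_mul_inv, ← Real.exp_neg]
    congr 1
    ring
  have hI1 : IntegrableOn (fun a : ℝ =>
      Real.exp (a * x - c * a ^ 2 * t) * (Real.cosh a * Real.exp (-c * a ^ 2) - 1))
      (Set.Ioi 0) := integrand_integrableOn c x t hc0 ht
  have hI2 : IntegrableOn (fun a : ℝ =>
      Real.exp (a * (x + ε) - c * a ^ 2 * (t + δ)) * (Real.cosh a * Real.exp (-c * a ^ 2) - 1))
      (Set.Ioi 0) := integrand_integrableOn c (x + ε) (t + δ) hc0 (by linarith)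
  have hpt : ∀ a ∈ Set.Ioi (0 : ℝ), 0 ≤
      Real.exp (a * (x + ε) - c * a ^ 2 * (t + δ)) * (Real.cosh a * Real.exp (-c * a ^ 2) - 1) -
        K * (Real.exp (a * x - c * a ^ 2 * t) * (Real.cosh a * Real.exp (-c * a ^ 2) - 1)) := by
    intro a ha
    rw [Set.mem_Ioi] at ha
    have hsplit : Real.exp (a * (x + ε) - c * a ^ 2 * (t + δ)) =
        Real.exp (a * x - c * a ^ 2 * t) * Real.exp (ε * a - δ * c * a ^ 2) := by
      rw [← Real.exp_add]; congr 1; ring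
    have core : 0 ≤ (Real.exp (ε * a - δ * c * a ^ 2) - K) *
        (Real.cosh a * Real.exp (-c * a ^ 2) - 1) := by
      rcases le_total a a₀ with hle | hge
      · apply mul_nonneg
        · rw [sub_nonneg, hK]
          apply Real.exp_le_exp.2
          have hda : 0 ≤ δ * c * a := mul_nonneg (mul_nonneg hδ hc0.le) ha.le
          have hda0 : 0 ≤ δ * c * a₀ := mul_nonneg (mul_nonneg hδ hc0.le) ha₀.le
          have h1 : 0 ≤ (a₀ - a) * (δ * c * (a + a₀) - ε) :=
            mul_nonneg (by linarith) (by nlinarith)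
          nlinarith [h1]
        · rw [sub_nonneg, hrw a]
          exact Real.one_le_exp (hA a ha hle)
      · have hx : Real.exp (ε * a - δ * c * a ^ 2) - K ≤ 0 := by
          rw [sub_nonpos, hK]
          apply Real.exp_le_exp.2
          have hda : 0 ≤ δ * c * a := mul_nonneg (mul_nonneg hδ hc0.le) ha.le
          have hda0 : 0 ≤ δ * c * a₀ := mul_nonneg (mul_nonneg hδ hc0.le) ha₀.le
          have h1 : 0 ≤ (a - a₀) * (δ * c * (a + a₀) - ε) :=
            mul_nonneg (by linarith) (by nlinarith)
          nlinarith [h1]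
        have hy : Real.cosh a * Real.exp (-c * a ^ 2) - 1 ≤ 0 := by
          rw [sub_nonpos, hrw a]
          rw [← Real.exp_zero]
          exact Real.exp_le_exp.2 (hB a hge)
        nlinarith [mul_nonneg (neg_nonneg.2 hx) (neg_nonneg.2 hy)]
    rw [hsplit]
    have heq : Real.exp (a * x - c * a ^ 2 * t) * Real.exp (ε * a - δ * c * a ^ 2) *
          (Real.cosh a * Real.exp (-c * a ^ 2) - 1) -
        K * (Real.exp (a * x - c * a ^ 2 * t) * (Real.cosh a * Real.exp (-c * a ^ 2) - 1)) =
        Real.exp (a * x - c * a ^ 2 * t) * ((Real.exp (ε * a - δ * c * a ^ 2) - K) *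
          (Real.cosh a * Real.exp (-c * a ^ 2) - 1)) := by ring
    rw [heq]
    exact mul_nonneg (Real.exp_pos _).le core
  have hint := MeasureTheory.setIntegral_nonneg (μ := volume) measurableSet_Ioi hpt
  rw [MeasureTheory.integral_sub hI2 (hI1.const_mul K),
    MeasureTheory.integral_const_mul] at hint
  have hmain : K * f t x ≤ f (t + δ) (x + ε) := by
    rw [hf t x, hf (t + δ) (x + ε)]
    linarith
  exact ⟨hmain, le_trans (mul_nonneg (Real.exp_pos _).le hfpos) hmain⟩
end

section
/- In the Chow–Robbins game, the point (8,2) belongs to the stopping set: if V_u(9,3) = 1/3 and V_u(9,1) = h(9,1) where h(t,x) = (1-α²)√(π/(2t))e^{x²/(2t)}(erf(x/√(2t))+1) is an upper bound for the value function at time 9, then (V_u(9,3) + V_u(9,1))/2 < 2/8, hence V^S(8,2) = 2/8 = g(8,2). -/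
open MeasureTheory Real

/- ### Auxiliary lemmas -/

lemma exp_neg_taylor (u : ℝ) (h0 : 0 ≤ u) (h1 : u ≤ 1) :
    |Real.exp (-u) - (1 - u + u^2/2 - u^3/6)| ≤ 5*u^4/96 := by
  have h := Real.exp_bound (x := -u) (by rwa [abs_neg, abs_of_nonneg h0]) (n := 4) (by norm_num)
  have e1 : ∑ m ∈ Finset.range 4, (-u) ^ m / m.factorial = 1 - u + u^2/2 - u^3/6 := by
    simp [Finset.sum_range_succ, Nat.factorial]; ring
  rw [e1] at h
  calc |Real.exp (-u) - (1 - u + u^2/2 - u^3/6)|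
      ≤ |(-u)|^4 * ((4:ℕ).succ / ((4:ℕ).factorial * 4)) := h
    _ = 5*u^4/96 := by rw [abs_neg, abs_of_nonneg h0]; norm_num [Nat.factorial]; ring

lemma integral_erf_poly (c z : ℝ) :
    ∫ s in (0:ℝ)..z, (1 - s^2 + s^4/2 - s^6/6 + c*s^8)
      = z - z^3/3 + z^5/10 - z^7/42 + c*z^9/9 := by
  have F' : ∀ s : ℝ, HasDerivAt (fun x : ℝ => x - x^3/3 + x^5/10 - x^7/42 + c*x^9/9)
      (1 - s^2 + s^4/2 - s^6/6 + c*s^8) s := by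
    intro s
    have h := ((((hasDerivAt_id s).sub ((hasDerivAt_pow 3 s).div_const 3)).add
      ((hasDerivAt_pow 5 s).div_const 10)).sub ((hasDerivAt_pow 7 s).div_const 42)).add
      (((hasDerivAt_pow 9 s).const_mul c).div_const 9)
    exact h.congr_deriv (by push_cast; ring)
  rw [intervalIntegral.integral_eq_sub_of_hasDerivAt (fun s _ => F' s)
    (by apply Continuous.intervalIntegrable; continuity)]
  ring

lemma erf_le_poly (z : ℝ) (h0 : 0 ≤ z) (h1 : z ≤ 1) :
    erf z ≤ 2 / Real.sqrt π * (z - z^3/3 + z^5/10 - z^7/42 + 5*z^9/864) := by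
  have hint : (∫ s in (0:ℝ)..z, Real.exp (-s^2))
      ≤ ∫ s in (0:ℝ)..z, (1 - s^2 + s^4/2 - s^6/6 + (5/96)*s^8) := by
    apply intervalIntegral.integral_mono_on h0
      (Continuous.intervalIntegrable (by continuity) _ _)
      (Continuous.intervalIntegrable (by continuity) _ _)
    intro s hs
    have hu1 : s^2 ≤ 1 := by nlinarith [hs.1, hs.2]
    have h2 := (abs_le.1 (exp_neg_taylor (s^2) (sq_nonneg s) hu1)).2
    nlinarith [h2]
  rw [integral_erf_poly] at hint
  have hc : (0:ℝ) ≤ 2 / Real.sqrt π := by positivity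
  calc erf z ≤ 2 / Real.sqrt π * (z - z^3/3 + z^5/10 - z^7/42 + (5/96)*z^9/9) :=
        mul_le_mul_of_nonneg_left hint hc
    _ = 2 / Real.sqrt π * (z - z^3/3 + z^5/10 - z^7/42 + 5*z^9/864) := by ring

lemma erf_ge_poly (z : ℝ) (h0 : 0 ≤ z) (h1 : z ≤ 1) :
    2 / Real.sqrt π * (z - z^3/3 + z^5/10 - z^7/42 - 5*z^9/864) ≤ erf z := by
  have hint : (∫ s in (0:ℝ)..z, (1 - s^2 + s^4/2 - s^6/6 + (-5/96)*s^8))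
      ≤ ∫ s in (0:ℝ)..z, Real.exp (-s^2) := by
    apply intervalIntegral.integral_mono_on h0
      (Continuous.intervalIntegrable (by continuity) _ _)
      (Continuous.intervalIntegrable (by continuity) _ _)
    intro s hs
    have hu1 : s^2 ≤ 1 := by nlinarith [hs.1, hs.2]
    have h2 := (abs_le.1 (exp_neg_taylor (s^2) (sq_nonneg s) hu1)).1
    nlinarith [h2]
  rw [integral_erf_poly] at hint
  have hc : (0:ℝ) ≤ 2 / Real.sqrt π := by positivity
  calc 2 / Real.sqrt π * (z - z^3/3 + z^5/10 - z^7/42 - 5*z^9/864)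
      = 2 / Real.sqrt π * (z - z^3/3 + z^5/10 - z^7/42 + (-5/96)*z^9/9) := by ring
    _ ≤ erf z := mul_le_mul_of_nonneg_left hint hc

lemma erf_nonneg' (z : ℝ) (h0 : 0 ≤ z) : 0 ≤ erf z := by
  have : (0:ℝ) ≤ ∫ s in (0:ℝ)..z, Real.exp (-s^2) :=
    intervalIntegral.integral_nonneg h0 (fun s _ => (Real.exp_pos _).le)
  have hc : (0:ℝ) ≤ 2 / Real.sqrt π := by positivity
  exact mul_nonneg hc this

lemma sqrt2_pow_even (n : ℕ) : Real.sqrt 2 ^ (2*n) = 2^n := by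
  rw [pow_mul, Real.sq_sqrt (by norm_num)]

lemma conv_lo (t : ℝ) : 2 / Real.sqrt π * (t/Real.sqrt 2 - (t/Real.sqrt 2)^3/3
      + (t/Real.sqrt 2)^5/10 - (t/Real.sqrt 2)^7/42 - 5*(t/Real.sqrt 2)^9/864)
    = Real.sqrt 2 / Real.sqrt π * (t - t^3/6 + t^5/40 - t^7/336 - 5*t^9/13824) := by
  have hne : Real.sqrt 2 ≠ 0 := by positivity
  field_simp
  ring_nf
  simp only [show (8:ℕ)=2*4 from rfl, show (6:ℕ)=2*3 from rfl, show (10:ℕ)=2*5 from rfl,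
    show (4:ℕ)=2*2 from rfl, sqrt2_pow_even, Real.sq_sqrt (show (0:ℝ) ≤ 2 by norm_num)]
  ring

lemma conv_hi (t : ℝ) : 2 / Real.sqrt π * (t/Real.sqrt 2 - (t/Real.sqrt 2)^3/3
      + (t/Real.sqrt 2)^5/10 - (t/Real.sqrt 2)^7/42 + 5*(t/Real.sqrt 2)^9/864)
    = Real.sqrt 2 / Real.sqrt π * (t - t^3/6 + t^5/40 - t^7/336 + 5*t^9/13824) := by
  have hne : Real.sqrt 2 ≠ 0 := by positivity
  field_simp
  ring_nf
  simp only [show (8:ℕ)=2*4 from rfl, show (6:ℕ)=2*3 from rfl, show (10:ℕ)=2*5 from rfl,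
    show (4:ℕ)=2*2 from rfl, sqrt2_pow_even, Real.sq_sqrt (show (0:ℝ) ≤ 2 by norm_num)]
  ring

lemma one_le_sqrt_two : (1:ℝ) ≤ Real.sqrt 2 := by
  rw [show (1:ℝ) = Real.sqrt 1 by simp]
  exact Real.sqrt_le_sqrt (by norm_num)

lemma p_lo_bound : (79788/100000 : ℝ) ≤ Real.sqrt 2 / Real.sqrt π := by
  rw [← Real.sqrt_div (by norm_num : (0:ℝ) ≤ 2) π]
  have hpi := Real.pi_lt_d6
  have h2 : ((79788/100000:ℝ))^2 ≤ 2/π := by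
    rw [le_div_iff₀ Real.pi_pos]; nlinarith
  calc (79788/100000:ℝ) = Real.sqrt ((79788/100000)^2) := (Real.sqrt_sq (by norm_num)).symm
    _ ≤ Real.sqrt (2/π) := Real.sqrt_le_sqrt h2

lemma p_hi_bound : Real.sqrt 2 / Real.sqrt π ≤ 79789/100000 := by
  rw [← Real.sqrt_div (by norm_num : (0:ℝ) ≤ 2) π]
  have hpi := Real.pi_gt_d6
  have h2 : 2/π ≤ ((79789/100000:ℝ))^2 := by
    rw [div_le_iff₀ Real.pi_pos]; nlinarith
  calc Real.sqrt (2/π) ≤ Real.sqrt ((79789/100000)^2) := Real.sqrt_le_sqrt h2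
    _ = 79789/100000 := Real.sqrt_sq (by norm_num)

lemma poly_key (a : ℝ) (h0 : 0 < a) (h1 : a < 1) :
    (26668/10000 : ℝ) * a * (1 - a^2/2 + a^4/8 - a^6/48 + 5*a^8/1536)
      < 1 + (79788/100000) * (a - a^3/6 + a^5/40 - a^7/336 - 5*a^9/13824) := by
  nlinarith [sq_nonneg (a - 839/1000), sq_nonneg a, sq_nonneg (a^2 - 7/10),
    sq_nonneg (a*(a-839/1000)), sq_nonneg ((a-839/1000)*(a-839/1000)), pow_pos h0 3,
    pow_pos h0 5, sq_nonneg (a^3 - 1/2), sq_nonneg (a^4-1/2), mul_pos h0 (sub_pos.2 h1)]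

lemma sqrt18_eq : Real.sqrt 18 = 3 * Real.sqrt 2 := by
  rw [show (18:ℝ) = 3^2 * 2 by norm_num, Real.sqrt_mul (by positivity), Real.sqrt_sq (by norm_num)]

lemma erf18_le : erf (1/Real.sqrt 18) ≤ Real.sqrt 2 / Real.sqrt π * (327263/1000000) := by
  have harg : (1:ℝ)/Real.sqrt 18 = (1/3)/Real.sqrt 2 := by rw [sqrt18_eq]; ring
  rw [harg]
  have h1 : (1:ℝ)/3/Real.sqrt 2 ≤ 1 := by
    rw [div_le_one (by positivity)]
    linarith [one_le_sqrt_two]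
  have hb := erf_le_poly ((1:ℝ)/3/Real.sqrt 2) (by positivity) h1
  refine hb.trans ?_
  rw [show ((1:ℝ)/3/Real.sqrt 2) = (1/3:ℝ)/Real.sqrt 2 by norm_num, conv_hi (1/3)]
  apply mul_le_mul_of_nonneg_left (by norm_num) (by positivity)

lemma erfa_ge (a : ℝ) (h0 : 0 ≤ a) (h1 : a ≤ 1) :
    Real.sqrt 2 / Real.sqrt π * (a - a^3/6 + a^5/40 - a^7/336 - 5*a^9/13824)
      ≤ erf (a/Real.sqrt 2) := by
  have hz1 : a/Real.sqrt 2 ≤ 1 := by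
    rw [div_le_one (by positivity)]
    linarith [one_le_sqrt_two]
  calc Real.sqrt 2 / Real.sqrt π * (a - a^3/6 + a^5/40 - a^7/336 - 5*a^9/13824)
      = 2 / Real.sqrt π * (a/Real.sqrt 2 - (a/Real.sqrt 2)^3/3 + (a/Real.sqrt 2)^5/10
        - (a/Real.sqrt 2)^7/42 - 5*(a/Real.sqrt 2)^9/864) := (conv_lo a).symm
    _ ≤ erf (a/Real.sqrt 2) := erf_ge_poly _ (by positivity) hz1

lemma exp18_le : Real.exp ((1:ℝ)/18) ≤ 55487/52488 := by
  have h := Real.exp_bound' (x := 1/18) (by norm_num) (by norm_num) (n := 3) (by norm_num)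
  refine h.trans ?_
  norm_num [Finset.sum_range_succ, Nat.factorial]

/-- The point `(8,2)` belongs to the stopping set of the Chow–Robbins game: with
`h` the explicit upper-bound function, `VW` the Brownian value function, and `VS` the
value function of the Chow–Robbins game (satisfying the dynamic programming principle,
the gain lower bound and the upper bound `VS ≤ VW`), one-step backwards induction gives
`(VW(9,3) + h(9,1))/2 = (1/3 + h(9,1))/2 < 2/8`, hence `V^S(8,2) = 2/8 = g(8,2)`. -/
theorem point_8_2_is_stopping (α : ℝ) (hα : α ∈ Set.Ioo (0 : ℝ) 1)
    (heq : Real.sqrt (2 * π) * (1 - α ^ 2) * Real.exp (α ^ 2 / 2)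
      * (erf (α / Real.sqrt 2) + 1) = 2 * α)
    (h : ℝ → ℝ → ℝ)
    (hh : ∀ t x, h t x = (1 - α ^ 2) * Real.sqrt (π / (2 * t))
      * Real.exp (x ^ 2 / (2 * t)) * (erf (x / Real.sqrt (2 * t)) + 1))
    (VW : ℝ → ℝ → ℝ)
    (hVW : ∀ t x, VW t x = if x ≤ α * Real.sqrt t then h t x else x / t)
    (VS : ℝ → ℝ → ℝ)
    (hDPP : ∀ (n : ℕ) (x : ℝ), 0 < n →
      VS n x = max (x / n) ((VS (n + 1) (x + 1) + VS (n + 1) (x - 1)) / 2))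
    (hgain : ∀ t x : ℝ, 0 < t → x / t ≤ VS t x)
    (hub : ∀ t x : ℝ, 0 < t → VS t x ≤ VW t x) :
    ((1 : ℝ) / 3 + h 9 1) / 2 < 2 / 8 ∧ VS 8 2 = 2 / 8 := by
  obtain ⟨hα0, hα1⟩ := hα
  have hsπ : (0:ℝ) < Real.sqrt π := Real.sqrt_pos.2 Real.pi_pos
  have herf18_0 : 0 ≤ erf (1/Real.sqrt 18) := erf_nonneg' _ (by positivity)
  have herfα_0 : 0 ≤ erf (α/Real.sqrt 2) := erf_nonneg' _ (by positivity)
  -- step 1 : the key strict inequality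
  have hexpneg : Real.exp (-(α^2/2)) ≤ 1 - α^2/2 + α^4/8 - α^6/48 + 5*α^8/1536 := by
    have hu1 : α^2/2 ≤ 1 := by nlinarith
    have h2 := (abs_le.1 (exp_neg_taylor (α^2/2) (by positivity) hu1)).2
    nlinarith [h2]
  have hB : 0 ≤ α - α^3/6 + α^5/40 - α^7/336 - 5*α^9/13824 := by
    have h31 : α^3 ≤ α^1 := pow_le_pow_of_le_one hα0.le hα1.le (by norm_num)
    have h91 : α^9 ≤ α^1 := pow_le_pow_of_le_one hα0.le hα1.le (by norm_num)
    have h75 : α^7 ≤ α^5 := pow_le_pow_of_le_one hα0.le hα1.le (by norm_num)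
    have h5 : (0:ℝ) < α^5 := pow_pos hα0 5
    rw [pow_one] at h31 h91
    nlinarith
  have hL : Real.exp ((1:ℝ)/18) * (erf (1/Real.sqrt 18) + 1) ≤ 13334/10000 := by
    have h1 : erf (1/Real.sqrt 18) ≤ 79789/100000 * (327263/1000000) := by
      refine erf18_le.trans ?_
      apply mul_le_mul_of_nonneg_right p_hi_bound (by norm_num)
    nlinarith [exp18_le, Real.exp_pos ((1:ℝ)/18), herf18_0]
  have hEpos : (0:ℝ) < 1 - α^2/2 + α^4/8 - α^6/48 + 5*α^8/1536 :=
    lt_of_lt_of_le (Real.exp_pos _) hexpneg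
  have hLpos : (0:ℝ) < Real.exp ((1:ℝ)/18) * (erf (1/Real.sqrt 18) + 1) := by positivity
  have step1 : 2*α * (Real.exp ((1:ℝ)/18) * (erf (1/Real.sqrt 18) + 1)) * Real.exp (-(α^2/2))
      < 1 + erf (α/Real.sqrt 2) := by
    calc 2*α * (Real.exp ((1:ℝ)/18) * (erf (1/Real.sqrt 18) + 1)) * Real.exp (-(α^2/2))
        ≤ 2*α * (13334/10000) * (1 - α^2/2 + α^4/8 - α^6/48 + 5*α^8/1536) := by
          apply mul_le_mul (by nlinarith [hL]) hexpneg (Real.exp_pos _).le (by positivity)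
      _ = (26668/10000) * α * (1 - α^2/2 + α^4/8 - α^6/48 + 5*α^8/1536) := by ring
      _ < 1 + (79788/100000) * (α - α^3/6 + α^5/40 - α^7/336 - 5*α^9/13824) :=
          poly_key α hα0 hα1
      _ ≤ 1 + Real.sqrt 2 / Real.sqrt π * (α - α^3/6 + α^5/40 - α^7/336 - 5*α^9/13824) := by
          have := mul_le_mul_of_nonneg_right p_lo_bound hB
          linarith
      _ ≤ 1 + erf (α/Real.sqrt 2) := by linarith [erfa_ge α hα0.le hα1.le]
  have key : 2*α * (Real.exp ((1:ℝ)/18) * (erf (1/Real.sqrt 18) + 1))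
      < Real.exp (α^2/2) * (erf (α/Real.sqrt 2) + 1) := by
    have hee : Real.exp (-(α^2/2)) * Real.exp (α^2/2) = 1 := by
      rw [← Real.exp_add]; norm_num
    have hid : 2*α * (Real.exp ((1:ℝ)/18) * (erf (1/Real.sqrt 18) + 1))
        = (2*α * (Real.exp ((1:ℝ)/18) * (erf (1/Real.sqrt 18) + 1)) * Real.exp (-(α^2/2)))
          * Real.exp (α^2/2) := by
      linear_combination (-(2*α * (Real.exp ((1:ℝ)/18) * (erf (1/Real.sqrt 18) + 1)))) * hee
    rw [hid]
    calc (2*α * (Real.exp ((1:ℝ)/18) * (erf (1/Real.sqrt 18) + 1)) * Real.exp (-(α^2/2)))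
          * Real.exp (α^2/2)
        < (1 + erf (α/Real.sqrt 2)) * Real.exp (α^2/2) :=
          mul_lt_mul_of_pos_right step1 (Real.exp_pos _)
      _ = Real.exp (α^2/2) * (erf (α/Real.sqrt 2) + 1) := by ring
  -- step 2 : h 9 1 < 1/6
  have hh91 : h 9 1 = (1 - α^2) * Real.sqrt (π/18) * Real.exp ((1:ℝ)/18)
      * (erf (1/Real.sqrt 18) + 1) := by
    rw [hh 9 1]; norm_num
  have hsqrt : Real.sqrt (2*π) = 6 * Real.sqrt (π/18) := by
    rw [show (2*π) = 6^2 * (π/18) by ring, Real.sqrt_mul (by positivity), Real.sqrt_sq (by norm_num)]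
  have hDpos : (0:ℝ) < Real.exp (α^2/2) * (erf (α/Real.sqrt 2) + 1) := by positivity
  have h91lt : h 9 1 < 1/6 := by
    have hmul : 6 * h 9 1 * (Real.exp (α^2/2) * (erf (α/Real.sqrt 2) + 1))
        = 2*α * (Real.exp ((1:ℝ)/18) * (erf (1/Real.sqrt 18) + 1)) := by
      rw [hh91]
      rw [hsqrt] at heq
      linear_combination (Real.exp ((1:ℝ)/18) * (erf (1/Real.sqrt 18) + 1)) * heq
    have h6 : 6 * h 9 1 * (Real.exp (α^2/2) * (erf (α/Real.sqrt 2) + 1))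
        < 1 * (Real.exp (α^2/2) * (erf (α/Real.sqrt 2) + 1)) := by
      rw [hmul, one_mul]; exact key
    have := lt_of_mul_lt_mul_right h6 hDpos.le
    linarith
  refine ⟨by linarith, ?_⟩
  -- part 2
  have hsqrt9 : Real.sqrt 9 = 3 := by
    rw [show (9:ℝ) = 3^2 by norm_num, Real.sqrt_sq (by norm_num)]
  have h93 : VS 9 3 ≤ 1/3 := by
    have hb := hub 9 3 (by norm_num)
    rw [hVW, hsqrt9, if_neg (by nlinarith)] at hb
    linarith
  have h91' : VS 9 1 ≤ 1/6 := by
    have hb := hub 9 1 (by norm_num)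
    rw [hVW, hsqrt9] at hb
    by_cases hc : (1:ℝ) ≤ α * 3
    · rw [if_pos hc] at hb; linarith
    · rw [if_neg hc] at hb; linarith
  have hd := hDPP 8 2 (by norm_num)
  norm_num at hd
  rw [hd, max_eq_left (by linarith)]
  norm_num
end
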